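/- arXiv:1712.02999 — 6 statements merged into one kernel-verified Lean document; each statement's English description precedes it below -/
import Mathlib

section
/- Let Z be a binomial random variable with parameters n ≥ 1 and p ∈ (0,1). Then E[1_{Z ≥ 1}/√Z] ≤ ω(p)/√(2np), where ω(p) := min_{u ∈ (0,1)} ( √(2/u) + √(1/(2ep))·1/(1-u) ). -/
open MeasureTheory ProbabilityTheory Finset

/-- The function `ω(p) = inf_{u ∈ (0,1)} ( √(2/u) + √(1/(2ep))·1/(1-u) )`. -/
noncomputable def omegaFun (p : ℝ) : ℝ :=
  sInf {y : ℝ | ∃ u : ℝ, 0 < u ∧ u < 1 ∧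
    y = Real.sqrt (2 / u) + Real.sqrt (1 / (2 * Real.exp 1 * p)) * (1 / (1 - u))}

lemma omegaFun_ge_two {p : ℝ} (hp0 : 0 < p) (hp1 : p < 1) : 2 ≤ omegaFun p := by
  refine le_csInf ⟨Real.sqrt (2 / (1/2)) +
      Real.sqrt (1 / (2 * Real.exp 1 * p)) * (1 / (1 - 1/2)),
      ⟨1/2, by norm_num, by norm_num, rfl⟩⟩ ?_
  rintro y ⟨u, hu0, hu1, rfl⟩
  have he : (0:ℝ) < Real.exp 1 := Real.exp_pos 1
  have h1u : (0:ℝ) < 1 - u := by linarith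
  by_cases h : u ≤ 1/2
  · have h4 : (4:ℝ) ≤ 2/u := by rw [le_div_iff₀ hu0]; linarith
    have h1 : (2:ℝ) ≤ Real.sqrt (2/u) := by
      have := Real.sqrt_le_sqrt h4
      rwa [show (4:ℝ) = 2^2 by norm_num, Real.sqrt_sq (by norm_num)] at this
    have h2 : 0 ≤ Real.sqrt (1/(2*Real.exp 1*p)) * (1/(1-u)) := by positivity
    linarith
  · push_neg at h
    have hs2 : Real.sqrt 2 ≤ Real.sqrt (2/u) := by
      apply Real.sqrt_le_sqrt
      rw [le_div_iff₀ hu0]; nlinarith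
    have hs2' : (1.41:ℝ) ≤ Real.sqrt 2 :=
      (Real.le_sqrt (by norm_num) (by norm_num)).mpr (by norm_num)
    have h2ep : 2 * Real.exp 1 * p ≤ 6 := by
      have := Real.exp_one_lt_d9
      nlinarith
    have ht : Real.sqrt (1/6) ≤ Real.sqrt (1/(2*Real.exp 1*p)) := by
      apply Real.sqrt_le_sqrt
      rw [div_le_div_iff₀ (by norm_num) (by positivity)]
      linarith
    have ht' : (0.4:ℝ) ≤ Real.sqrt (1/6) := by
      rw [show (0.4:ℝ) ≤ Real.sqrt (1/6) ↔ (0.4:ℝ)^2 ≤ 1/6 from Real.le_sqrt (by norm_num) (by norm_num)]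
      norm_num
    have hu' : (2:ℝ) ≤ 1/(1-u) := by
      rw [le_div_iff₀ h1u]; linarith
    have : (0.4:ℝ) * 2 ≤ Real.sqrt (1/(2*Real.exp 1*p)) * (1/(1-u)) := by
      apply mul_le_mul (le_trans ht' ht) hu' (by norm_num)
      positivity
    linarith

lemma integral_eq_sum {Ω : Type*} [MeasureSpace Ω] [IsProbabilityMeasure (ℙ : Measure Ω)]
    (n : ℕ) (Z : Ω → ℕ) (hmeas : Measurable Z) (hle : ∀ ω, Z ω ≤ n) (g : ℕ → ℝ) :
    ∫ ω, g (Z ω) ∂ℙ = ∑ k ∈ Finset.range (n+1), g k * (ℙ {ω | Z ω = k}).toReal := by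
  have hms : ∀ k : ℕ, MeasurableSet {ω | Z ω = k} := fun k =>
    hmeas (measurableSet_singleton k)
  have h1 : (fun ω => g (Z ω)) =
      fun ω => ∑ k ∈ Finset.range (n+1),
        Set.indicator {ω' | Z ω' = k} (fun _ => g k) ω := by
    funext ω
    have : ∀ k, Set.indicator {ω' | Z ω' = k} (fun _ => g k) ω
        = if Z ω = k then g k else 0 := by
      intro k
      simp [Set.indicator_apply, Set.mem_setOf_eq]
    simp_rw [this, Finset.sum_ite_eq, Finset.mem_range]
    rw [if_pos (Nat.lt_succ_of_le (hle ω))]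
  rw [h1, integral_finset_sum]
  · refine Finset.sum_congr rfl fun k _ => ?_
    rw [integral_indicator_const _ (hms k), smul_eq_mul, mul_comm, measureReal_def]
  · intro k _
    exact (integrable_const (g k)).indicator (hms k)

lemma binom_sum_one {p : ℝ} (n : ℕ) :
    ∑ k ∈ Finset.range (n+1), (n.choose k : ℝ) * p ^ k * (1-p) ^ (n-k) = 1 := by
  calc ∑ k ∈ Finset.range (n+1), (n.choose k : ℝ) * p ^ k * (1-p) ^ (n-k)
      = (p + (1-p))^n := by
        rw [add_pow]; exact Finset.sum_congr rfl fun k _ => by ring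
    _ = 1 := by ring

theorem stmt_1 {Ω : Type*} [MeasureSpace Ω] [IsProbabilityMeasure (ℙ : Measure Ω)]
    (n : ℕ) (hn : 1 ≤ n) (p : ℝ) (hp0 : 0 < p) (hp1 : p < 1)
    (Z : Ω → ℕ) (hmeas : Measurable Z) (hle : ∀ ω, Z ω ≤ n)
    (hbinom : ∀ k : ℕ, k ≤ n →
      (ℙ {ω | Z ω = k}).toReal = (n.choose k : ℝ) * p ^ k * (1 - p) ^ (n - k)) :
    (∫ ω, (if 1 ≤ Z ω then 1 / Real.sqrt (Z ω) else 0) ∂ℙ)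
      ≤ omegaFun p / Real.sqrt (2 * n * p) := by
  set q := 1 - p with hq
  have hq0 : 0 ≤ q := by rw [hq]; linarith
  set w : ℕ → ℝ := fun k => (n.choose k : ℝ) * p ^ k * q ^ (n-k) with hwdef
  have hw0 : ∀ k, 0 ≤ w k := fun k => by positivity
  have hwsum : ∑ k ∈ Finset.range (n+1), w k = 1 := binom_sum_one n
  have hn0 : (0:ℝ) < n := by exact_mod_cast hn
  have hnp : (0:ℝ) < n * p := by positivity
  -- integral equals sum
  set g : ℕ → ℝ := fun k => if 1 ≤ k then 1 / Real.sqrt k else 0 with hgdef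
  have hint : (∫ ω, (if 1 ≤ Z ω then 1 / Real.sqrt (Z ω) else 0) ∂ℙ)
      = ∑ k ∈ Finset.range (n+1), g k * w k := by
    rw [show (fun ω => if 1 ≤ Z ω then 1 / Real.sqrt (Z ω) else 0) = fun ω => g (Z ω) from rfl]
    rw [integral_eq_sum n Z hmeas hle g]
    refine Finset.sum_congr rfl fun k hk => ?_
    rw [hbinom k (Nat.lt_succ_iff.mp (Finset.mem_range.mp hk))]
  -- step 1 : termwise bound
  have step1 : ∑ k ∈ Finset.range (n+1), g k * w k
      ≤ Real.sqrt 2 * ∑ k ∈ Finset.range (n+1), w k / Real.sqrt (k+1) := by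
    rw [Finset.mul_sum]
    refine Finset.sum_le_sum fun k _ => ?_
    rcases Nat.eq_zero_or_pos k with rfl | hk1
    · have h0 : g 0 = 0 := by rw [hgdef]; simp
      rw [h0, zero_mul]
      exact mul_nonneg (Real.sqrt_nonneg 2)
        (div_nonneg (hw0 0) (Real.sqrt_nonneg _))
    · have hgk : g k = 1 / Real.sqrt k := by rw [hgdef]; exact if_pos hk1
      rw [hgk]
      have hk0 : (0:ℝ) < k := by exact_mod_cast hk1
      have key : 1 / Real.sqrt k ≤ Real.sqrt 2 / Real.sqrt (k+1) := by
        rw [show (1:ℝ) / Real.sqrt k = Real.sqrt (1/k) by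
              rw [Real.sqrt_div (by norm_num), Real.sqrt_one],
            show Real.sqrt 2 / Real.sqrt (k+1) = Real.sqrt (2/(k+1)) by
              rw [Real.sqrt_div (by norm_num)]]
        apply Real.sqrt_le_sqrt
        rw [div_le_div_iff₀ hk0 (by positivity)]
        have : (1:ℝ) ≤ k := by exact_mod_cast hk1
        linarith
      calc 1 / Real.sqrt k * w k ≤ Real.sqrt 2 / Real.sqrt (k+1) * w k :=
            mul_le_mul_of_nonneg_right key (hw0 k)
        _ = Real.sqrt 2 * (w k / Real.sqrt (k+1)) := by ring
  -- Cauchy-Schwarz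
  set A := ∑ k ∈ Finset.range (n+1), w k / Real.sqrt (k+1) with hA
  have hA0 : 0 ≤ A := Finset.sum_nonneg fun k _ => by positivity
  have hCS : A^2 ≤ (∑ k ∈ Finset.range (n+1), w k)
      * (∑ k ∈ Finset.range (n+1), w k * (1/(k+1))) := by
    have := Finset.sum_mul_sq_le_sq_mul_sq (Finset.range (n+1))
      (fun k => Real.sqrt (w k)) (fun k => Real.sqrt (w k) / Real.sqrt (k+1))
    have e1 : ∀ k ∈ Finset.range (n+1),
        Real.sqrt (w k) * (Real.sqrt (w k) / Real.sqrt (k+1)) = w k / Real.sqrt (k+1) := by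
      intro k _
      rw [show Real.sqrt (w k) * (Real.sqrt (w k) / Real.sqrt (k+1))
          = Real.sqrt (w k) * Real.sqrt (w k) / Real.sqrt (k+1) by ring,
        Real.mul_self_sqrt (hw0 k)]
    have e2 : ∀ k ∈ Finset.range (n+1), Real.sqrt (w k) ^ 2 = w k := fun k _ =>
      Real.sq_sqrt (hw0 k)
    have e3 : ∀ k ∈ Finset.range (n+1),
        (Real.sqrt (w k) / Real.sqrt (k+1)) ^ 2 = w k * (1/(k+1)) := by
      intro k _
      rw [div_pow, Real.sq_sqrt (hw0 k), Real.sq_sqrt (by positivity : (0:ℝ) ≤ (k:ℝ)+1)]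
      ring
    rw [Finset.sum_congr rfl e1, Finset.sum_congr rfl e2, Finset.sum_congr rfl e3] at this
    exact this
  -- the key sum bound
  have hsum2 : ∑ k ∈ Finset.range (n+1), w k * (1/(k+1)) ≤ 1 / (n * p) := by
    set G : ℕ → ℝ := fun j => ((n+1).choose j : ℝ) * p ^ j * q ^ (n+1-j) with hGdef
    have hG0 : ∀ j, 0 ≤ G j := fun j => by positivity
    have hGsum : ∑ j ∈ Finset.range (n+2), G j = 1 := binom_sum_one (n+1)
    have hterm : ∀ k ∈ Finset.range (n+1),
        w k * (1/(k+1)) = (1/((n+1)*p)) * G (k+1) := by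
      intro k hk
      have hkn : k ≤ n := Nat.lt_succ_iff.mp (Finset.mem_range.mp hk)
      have hc : ((n:ℝ)+1) * (n.choose k : ℝ) = ((n+1).choose (k+1) : ℝ) * ((k:ℝ)+1) := by
        exact_mod_cast congrArg (Nat.cast (R := ℝ)) (Nat.add_one_mul_choose_eq n k)
      have hnk : n + 1 - (k+1) = n - k := by omega
      have hcc : (n.choose k : ℝ) / ((k:ℝ)+1) = ((n+1).choose (k+1) : ℝ) / ((n:ℝ)+1) := by
        rw [div_eq_div_iff (by positivity) (by positivity)]
        linear_combination hc
      calc w k * (1/((k:ℝ)+1))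
          = (n.choose k : ℝ)/((k:ℝ)+1) * (p^k * q^(n-k)) := by rw [hwdef]; ring
        _ = ((n+1).choose (k+1) : ℝ)/((n:ℝ)+1) * (p^k * q^(n-k)) := by rw [hcc]
        _ = (1/(((n:ℝ)+1)*p)) * G (k+1) := by
            rw [hGdef]; simp only [hnk]
            rw [pow_succ]
            field_simp
    rw [Finset.sum_congr rfl hterm, ← Finset.mul_sum]
    have hshift : ∑ k ∈ Finset.range (n+1), G (k+1) = 1 - G 0 := by
      have := Finset.sum_range_succ' G (n+1)
      rw [hGsum] at this
      linarith
    rw [hshift]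
    have h1 : (1:ℝ)/((n+1)*p) * (1 - G 0) ≤ 1/((n+1)*p) := by
      have : (0:ℝ) < 1/((n+1)*p) := by positivity
      nlinarith [hG0 0]
    refine le_trans h1 ?_
    rw [div_le_div_iff₀ (by positivity) hnp]
    nlinarith
  have hA2 : A^2 ≤ 1/(n*p) := by
    rw [hwsum, one_mul] at hCS
    exact le_trans hCS hsum2
  have hAle : A ≤ Real.sqrt (1/(n*p)) :=
    (Real.le_sqrt hA0 (by positivity)).mpr hA2
  -- assemble
  have h2np : (0:ℝ) < Real.sqrt (2*n*p) := Real.sqrt_pos.mpr (by positivity)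
  have hBeq : Real.sqrt 2 * Real.sqrt (1/(n*p)) = 2 / Real.sqrt (2*n*p) := by
    rw [← Real.sqrt_mul (by norm_num), eq_div_iff h2np.ne', ← Real.sqrt_mul (by positivity)]
    rw [show (2 * (1/(n*p))) * (2*n*p) = 4 by field_simp; ring]
    rw [show (4:ℝ) = 2^2 by norm_num, Real.sqrt_sq (by norm_num)]
  calc (∫ ω, (if 1 ≤ Z ω then 1 / Real.sqrt (Z ω) else 0) ∂ℙ)
      ≤ Real.sqrt 2 * A := by rw [hint]; exact step1
    _ ≤ Real.sqrt 2 * Real.sqrt (1/(n*p)) :=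
        mul_le_mul_of_nonneg_left hAle (Real.sqrt_nonneg 2)
    _ = 2 / Real.sqrt (2*n*p) := hBeq
    _ ≤ omegaFun p / Real.sqrt (2*n*p) := by
        gcongr
        exact omegaFun_ge_two hp0 hp1
end

section
/- Let Z be a binomial random variable with parameters n and p, and let u ∈ (0,1). Then E[1_{Z ≥ 1}/√Z] ≤ (1/√(npu))·(1 + √(npu)·exp(-2n(1-u)²p²)). -/
open MeasureTheory ProbabilityTheory

open Real

lemma bern_mgf_le (p t : ℝ) (hp0 : 0 < p) (hp1 : p < 1) (ht : 0 ≤ t) :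
    p * Real.exp (-t) + (1 - p) ≤ Real.exp (t ^ 2 / 8 - t * p) := by
  set q : ℝ := 1 - p with hq
  have hq0 : 0 < q := by simp [hq]; linarith
  set g : ℝ → ℝ := fun x => p * Real.exp (-x) + q with hgdef
  have gpos : ∀ x, 0 < g x := fun x => by positivity
  set F : ℝ → ℝ := fun x => x ^ 2 / 8 - x * p - Real.log (g x) with hFdef
  set F1 : ℝ → ℝ := fun x => x / 4 - p + p * Real.exp (-x) / g x with hF1def
  have hg' : ∀ x : ℝ, HasDerivAt g (-(p * Real.exp (-x))) x := by
    intro x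
    have h1 : HasDerivAt (fun x : ℝ => Real.exp (-x)) (-Real.exp (-x)) x := by
      simpa using (hasDerivAt_neg x).exp
    have := (h1.const_mul p).add_const q
    simp only [mul_neg] at this
    exact this
  have hF' : ∀ x : ℝ, HasDerivAt F (F1 x) x := by
    intro x
    have h1 : HasDerivAt (fun x : ℝ => x ^ 2 / 8 - x * p) (x / 4 - p) x := by
      have := ((hasDerivAt_pow 2 x).div_const 8).sub ((hasDerivAt_id x).mul_const p)
      exact this.congr_deriv (by norm_num; ring)
    have h2 : HasDerivAt (fun x => Real.log (g x)) (-(p * Real.exp (-x)) / g x) x :=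
      (hg' x).log (ne_of_gt (gpos x))
    have := h1.sub h2
    exact this.congr_deriv (by simp [hF1def]; ring)
  have hF1' : ∀ x : ℝ, HasDerivAt F1 (1 / 4 - p * Real.exp (-x) * q / (g x) ^ 2) x := by
    intro x
    have hw : HasDerivAt (fun x : ℝ => p * Real.exp (-x)) (-(p * Real.exp (-x))) x := by
      have h1 : HasDerivAt (fun x : ℝ => Real.exp (-x)) (-Real.exp (-x)) x := by
        simpa using (hasDerivAt_neg x).exp
      simpa [mul_neg] using h1.const_mul p
    have hdiv : HasDerivAt (fun x => p * Real.exp (-x) / g x)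
        ((-(p * Real.exp (-x)) * g x - p * Real.exp (-x) * (-(p * Real.exp (-x)))) / (g x) ^ 2) x :=
      hw.div (hg' x) (ne_of_gt (gpos x))
    have h1 : HasDerivAt (fun x : ℝ => x / 4 - p) (1 / 4) x := by
      simpa using ((hasDerivAt_id x).div_const 4).sub_const p
    have := h1.add hdiv
    have hgx : g x = p * Real.exp (-x) + q := rfl
    have hg0 : g x ≠ 0 := (gpos x).ne'
    refine this.congr_deriv ?_
    field_simp
    ring
  have hF1nonneg : ∀ x : ℝ, (0:ℝ) ≤ 1 / 4 - p * Real.exp (-x) * q / (g x) ^ 2 := by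
    intro x
    have hgx : g x = p * Real.exp (-x) + q := rfl
    have he : 0 < Real.exp (-x) := Real.exp_pos _
    have hsq : 0 < (g x) ^ 2 := by positivity
    rw [sub_nonneg, div_le_iff₀ hsq, hgx]
    have hw : 0 < p * Real.exp (-x) := by positivity
    set w := p * Real.exp (-x) with hwdef
    nlinarith [sq_nonneg (w - q), hw.le, hq0.le]
  have hF1mono : Monotone F1 := by
    apply monotone_of_deriv_nonneg (fun x => (hF1' x).differentiableAt)
    intro x
    rw [(hF1' x).deriv]
    exact hF1nonneg x
  have hF10 : F1 0 = 0 := by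
    have : g 0 = 1 := by simp [hgdef, hq]
    simp [hF1def, this]
  have hF1pos : ∀ x : ℝ, 0 ≤ x → 0 ≤ F1 x := by
    intro x hx
    rw [← hF10]
    exact hF1mono hx
  have hFmono : MonotoneOn F (Set.Ici 0) := by
    apply monotoneOn_of_deriv_nonneg (convex_Ici 0)
    · have hFdiff : Differentiable ℝ F := fun x => (hF' x).differentiableAt
      exact hFdiff.continuous.continuousOn
    · exact fun x _ => (hF' x).differentiableAt.differentiableWithinAt
    · intro x hx
      rw [(hF' x).deriv]
      exact hF1pos x (le_of_lt (by simpa using hx))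
  have hF0 : F 0 = 0 := by
    have : g 0 = 1 := by simp [hgdef, hq]
    simp [hFdef, this]
  have hFt : 0 ≤ F t := by
    rw [← hF0]
    exact hFmono (Set.self_mem_Ici) (Set.mem_Ici.2 ht) ht
  have hlog : Real.log (g t) ≤ t ^ 2 / 8 - t * p := by
    have := hFt
    simp only [hFdef] at this
    linarith
  have := (Real.log_le_iff_le_exp (gpos t)).1 hlog
  simpa [hgdef] using this

lemma integral_comp_nat_eq_sum {Ω : Type*} [MeasureSpace Ω] [IsProbabilityMeasure (ℙ : Measure Ω)]
    (n : ℕ) (Z : Ω → ℕ) (hmeas : Measurable Z) (hle : ∀ ω, Z ω ≤ n) (g : ℕ → ℝ) :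
    ∫ ω, g (Z ω) ∂ℙ = ∑ k ∈ Finset.range (n + 1), g k * ((ℙ : Measure Ω) {ω | Z ω = k}).toReal := by
  have hset : ∀ k : ℕ, MeasurableSet {ω | Z ω = k} := fun k =>
    hmeas (measurableSet_singleton k)
  have hfun : ∀ ω, g (Z ω) =
      ∑ k ∈ Finset.range (n + 1), Set.indicator {ω | Z ω = k} (fun _ => g k) ω := by
    intro ω
    rw [Finset.sum_eq_single (Z ω)]
    · simp [Set.indicator_apply]
    · intro k _ hk
      simp only [Set.indicator_apply, Set.mem_setOf_eq]
      rw [if_neg (fun h => hk h.symm)]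
    · intro h
      exact absurd (Finset.mem_range.2 (Nat.lt_succ_of_le (hle ω))) h
  calc ∫ ω, g (Z ω) ∂ℙ
      = ∫ ω, ∑ k ∈ Finset.range (n + 1), Set.indicator {ω | Z ω = k} (fun _ => g k) ω ∂ℙ := by
        exact integral_congr_ae (Filter.Eventually.of_forall hfun)
    _ = ∑ k ∈ Finset.range (n + 1), ∫ ω, Set.indicator {ω | Z ω = k} (fun _ => g k) ω ∂ℙ := by
        apply integral_finset_sum
        intro k _
        exact (integrable_const (g k)).indicator (hset k)
    _ = ∑ k ∈ Finset.range (n + 1), g k * ((ℙ : Measure Ω) {ω | Z ω = k}).toReal := by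
        refine Finset.sum_congr rfl fun k _ => ?_
        rw [integral_indicator_const _ (hset k)]
        simp [mul_comm, Measure.real]

theorem stmt_2 {Ω : Type*} [MeasureSpace Ω] [IsProbabilityMeasure (ℙ : Measure Ω)]
    (n : ℕ) (hn : 1 ≤ n) (p : ℝ) (hp0 : 0 < p) (hp1 : p < 1)
    (u : ℝ) (hu0 : 0 < u) (hu1 : u < 1)
    (Z : Ω → ℕ) (hmeas : Measurable Z) (hle : ∀ ω, Z ω ≤ n)
    (hbinom : ∀ k : ℕ, k ≤ n →
      (ℙ {ω | Z ω = k}).toReal = (n.choose k : ℝ) * p ^ k * (1 - p) ^ (n - k)) :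
    (∫ ω, (if 1 ≤ Z ω then 1 / Real.sqrt (Z ω) else 0) ∂ℙ)
      ≤ (1 / Real.sqrt (n * p * u)) *
        (1 + Real.sqrt (n * p * u) * Real.exp (-2 * n * (1 - u) ^ 2 * p ^ 2)) := by
  set q : ℝ := 1 - p with hqdef
  have hq0 : 0 < q := by simp [hqdef]; linarith
  have hn1 : (1:ℝ) ≤ (n:ℝ) := by exact_mod_cast hn
  set m : ℝ := (n:ℝ) * p * u with hmdef
  have hm0 : 0 < m := by positivity
  set s : ℝ := Real.sqrt m with hsdef
  have hs0 : 0 < s := Real.sqrt_pos.2 hm0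
  set t : ℝ := 4 * p * (1 - u) with htdef
  have ht0 : 0 < t := by have : 0 < 1 - u := by linarith
                         positivity
  set g : ℕ → ℝ := fun k => if 1 ≤ k then 1 / Real.sqrt k else 0 with hgdef
  -- Step A : integral as a sum
  have hA : (∫ ω, (if 1 ≤ Z ω then 1 / Real.sqrt (Z ω) else 0) ∂ℙ)
      = ∑ k ∈ Finset.range (n + 1), g k * ((n.choose k : ℝ) * p ^ k * q ^ (n - k)) := by
    have := integral_comp_nat_eq_sum n Z hmeas hle g
    rw [show (∫ ω, (if 1 ≤ Z ω then 1 / Real.sqrt (Z ω) else 0) ∂ℙ)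
        = ∫ ω, g (Z ω) ∂ℙ from rfl, this]
    refine Finset.sum_congr rfl fun k hk => ?_
    rw [hbinom k (Nat.lt_succ_iff.1 (Finset.mem_range.1 hk))]
  -- pointwise bound
  have hpt : ∀ k ∈ Finset.range (n + 1), g k ≤ 1 / s + Real.exp (t * (m - k)) := by
    intro k _
    rcases Nat.eq_zero_or_pos k with hk0 | hk1
    · subst hk0
      simp only [hgdef]
      norm_num
      positivity
    · have hk1' : (1:ℝ) ≤ (k:ℝ) := by exact_mod_cast hk1
      simp only [hgdef]
      rw [if_pos (Nat.one_le_iff_ne_zero.2 (Nat.pos_iff_ne_zero.1 hk1))]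
      by_cases hkm : m ≤ (k:ℝ)
      · have h1 : 1 / Real.sqrt k ≤ 1 / s := by
          apply one_div_le_one_div_of_le hs0
          exact Real.sqrt_le_sqrt hkm
        have h2 : 0 ≤ Real.exp (t * (m - k)) := (Real.exp_pos _).le
        linarith
      · push_neg at hkm
        have h1 : 1 / Real.sqrt k ≤ 1 := by
          rw [div_le_one (Real.sqrt_pos.2 (by linarith))]
          exact Real.one_le_sqrt.2 hk1'
        have h2 : (1:ℝ) ≤ Real.exp (t * (m - k)) := by
          apply Real.one_le_exp
          have : 0 ≤ m - k := by linarith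
          positivity
        have h3 : 0 ≤ 1 / s := by positivity
        linarith
  have hpmf : ∀ k, (0:ℝ) ≤ (n.choose k : ℝ) * p ^ k * q ^ (n - k) := fun k => by positivity
  -- binomial sums
  have hsum1 : ∑ k ∈ Finset.range (n + 1), (n.choose k : ℝ) * p ^ k * q ^ (n - k) = 1 := by
    have hpq : p + q = 1 := by simp [hqdef]
    calc ∑ k ∈ Finset.range (n + 1), (n.choose k : ℝ) * p ^ k * q ^ (n - k)
        = ∑ k ∈ Finset.range (n + 1), p ^ k * q ^ (n - k) * (n.choose k : ℝ) :=
          Finset.sum_congr rfl fun k _ => by ring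
      _ = (p + q) ^ n := (add_pow p q n).symm
      _ = 1 := by rw [hpq, one_pow]
  set A : ℝ := p * Real.exp (-t) + q with hAdef
  have hA0 : 0 < A := by positivity
  have hsum2 : ∑ k ∈ Finset.range (n + 1),
      Real.exp (t * (m - k)) * ((n.choose k : ℝ) * p ^ k * q ^ (n - k))
      = Real.exp (t * m) * A ^ n := by
    have h := add_pow (p * Real.exp (-t)) q n
    rw [show (∑ k ∈ Finset.range (n + 1),
        Real.exp (t * (m - k)) * ((n.choose k : ℝ) * p ^ k * q ^ (n - k)))
        = ∑ k ∈ Finset.range (n + 1),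
          Real.exp (t * m) * ((p * Real.exp (-t)) ^ k * q ^ (n - k) * (n.choose k : ℝ)) from ?_]
    · rw [← Finset.mul_sum, ← h]
    · refine Finset.sum_congr rfl fun k _ => ?_
      have he : Real.exp (t * (m - k)) = Real.exp (t * m) * Real.exp (-t) ^ k := by
        rw [← Real.exp_nat_mul, ← Real.exp_add]
        ring_nf
      rw [he, mul_pow]
      ring
  -- Hoeffding bound
  have hber : A ≤ Real.exp (t ^ 2 / 8 - t * p) := bern_mgf_le p t hp0 hp1 ht0.le
  have hpow : A ^ n ≤ Real.exp ((n:ℝ) * (t ^ 2 / 8 - t * p)) := by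
    calc A ^ n ≤ Real.exp (t ^ 2 / 8 - t * p) ^ n := pow_le_pow_left₀ hA0.le hber n
      _ = Real.exp ((n:ℝ) * (t ^ 2 / 8 - t * p)) := (Real.exp_nat_mul _ n).symm
  have hexp : t * m + (n:ℝ) * (t ^ 2 / 8 - t * p) = -2 * n * (1 - u) ^ 2 * p ^ 2 := by
    rw [htdef, hmdef]; ring
  have htail : Real.exp (t * m) * A ^ n ≤ Real.exp (-2 * n * (1 - u) ^ 2 * p ^ 2) := by
    calc Real.exp (t * m) * A ^ n
        ≤ Real.exp (t * m) * Real.exp ((n:ℝ) * (t ^ 2 / 8 - t * p)) := by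
          exact mul_le_mul_of_nonneg_left hpow (Real.exp_pos _).le
      _ = Real.exp (t * m + (n:ℝ) * (t ^ 2 / 8 - t * p)) := (Real.exp_add _ _).symm
      _ = Real.exp (-2 * n * (1 - u) ^ 2 * p ^ 2) := by rw [hexp]
  -- put it together
  rw [hA]
  have key : ∑ k ∈ Finset.range (n + 1), g k * ((n.choose k : ℝ) * p ^ k * q ^ (n - k))
      ≤ 1 / s + Real.exp (t * m) * A ^ n := by
    calc ∑ k ∈ Finset.range (n + 1), g k * ((n.choose k : ℝ) * p ^ k * q ^ (n - k))
        ≤ ∑ k ∈ Finset.range (n + 1),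
            (1 / s + Real.exp (t * (m - k))) * ((n.choose k : ℝ) * p ^ k * q ^ (n - k)) := by
          refine Finset.sum_le_sum fun k hk => ?_
          exact mul_le_mul_of_nonneg_right (hpt k hk) (hpmf k)
      _ = (1 / s) * ∑ k ∈ Finset.range (n + 1), (n.choose k : ℝ) * p ^ k * q ^ (n - k)
            + ∑ k ∈ Finset.range (n + 1),
              Real.exp (t * (m - k)) * ((n.choose k : ℝ) * p ^ k * q ^ (n - k)) := by
          rw [Finset.mul_sum, ← Finset.sum_add_distrib]
          exact Finset.sum_congr rfl fun k _ => by ring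
      _ = 1 / s + Real.exp (t * m) * A ^ n := by rw [hsum1, hsum2, mul_one]
  have hrhs : (1 / Real.sqrt ((n:ℝ) * p * u)) *
        (1 + Real.sqrt ((n:ℝ) * p * u) * Real.exp (-2 * n * (1 - u) ^ 2 * p ^ 2))
      = 1 / s + Real.exp (-2 * n * (1 - u) ^ 2 * p ^ 2) := by
    rw [show Real.sqrt ((n:ℝ) * p * u) = s from rfl]
    field_simp
  rw [hrhs]
  have := le_trans key (by linarith : 1 / s + Real.exp (t * m) * A ^ n
    ≤ 1 / s + Real.exp (-2 * n * (1 - u) ^ 2 * p ^ 2))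
  exact this
end

section
/- The function ω(p) := min_{u ∈ (0,1)}( √(2/u) + √(1/(2ep))·1/(1-u) ) satisfies ω(p) ~ √(1/(2ep)) as p → 0, i.e., lim_{p→0} ω(p)·√(2ep) = 1. -/
theorem stmt_4 :
    Filter.Tendsto (fun p : ℝ => omegaFun p * Real.sqrt (2 * Real.exp 1 * p))
      (nhdsWithin 0 (Set.Ioi 0)) (nhds 1) := by
  rw [Metric.tendsto_nhdsWithin_nhds]
  intro ε hε
  have hE0 : 0 < Real.exp 1 := Real.exp_pos 1
  set E : ℝ := Real.exp 1 with hE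
  set u0 : ℝ := ε / (2 + ε) with hu0def
  have hu0 : 0 < u0 := div_pos hε (by linarith)
  have hu01 : u0 < 1 := by
    rw [hu0def, div_lt_one (by linarith)]; linarith
  refine ⟨ε ^ 2 * u0 / (16 * E), by positivity, ?_⟩
  intro p hp hpd
  simp only [Set.mem_Ioi] at hp
  rw [Real.dist_eq, sub_zero, abs_of_pos hp] at hpd
  have hx : 0 < 2 * E * p := by positivity
  set x : ℝ := 2 * E * p with hxdef
  set c : ℝ := Real.sqrt (1 / x) with hcdef
  set s : ℝ := Real.sqrt x with hsdef
  have hs0 : 0 < s := Real.sqrt_pos.mpr hx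
  have hcs : c * s = 1 := by
    rw [hcdef, hsdef, one_div, Real.sqrt_inv,
      inv_mul_cancel₀ (Real.sqrt_ne_zero'.mpr hx)]
  set S : Set ℝ := {y : ℝ | ∃ u : ℝ, 0 < u ∧ u < 1 ∧
    y = Real.sqrt (2 / u) + Real.sqrt (1 / (2 * E * p)) * (1 / (1 - u))} with hSdef
  have hSne : S.Nonempty := by
    exact ⟨_, 1/2, by norm_num, by norm_num, rfl⟩
  have hlb : ∀ y ∈ S, c ≤ y := by
    rintro y ⟨u, hu, hu1, rfl⟩
    have h1u : 0 < 1 - u := by linarith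
    have h1 : 1 ≤ 1 / (1 - u) := by
      rw [le_div_iff₀ h1u]; linarith
    have hc0 : 0 ≤ c := Real.sqrt_nonneg _
    have h2 : c ≤ c * (1 / (1 - u)) := le_mul_of_one_le_right hc0 h1
    have h3 : 0 ≤ Real.sqrt (2 / u) := Real.sqrt_nonneg _
    have : Real.sqrt (1 / (2 * E * p)) = c := by rw [hcdef, hxdef]
    rw [this]
    linarith
  have hbdd : BddBelow S := ⟨c, hlb⟩
  have homega : omegaFun p = sInf S := rfl
  have hlow : c ≤ omegaFun p := by
    rw [homega]; exact le_csInf hSne hlb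
  have hup : omegaFun p ≤ Real.sqrt (2 / u0) + c * (1 / (1 - u0)) := by
    rw [homega]
    refine csInf_le hbdd ⟨u0, hu0, hu01, ?_⟩
    rw [hcdef, hxdef]
  -- lower bound for the product
  have hflow : 1 ≤ omegaFun p * s := by
    calc 1 = c * s := hcs.symm
    _ ≤ omegaFun p * s := mul_le_mul_of_nonneg_right hlow hs0.le
  -- upper bound for the product
  have hinv : 1 / (1 - u0) = 1 + ε / 2 := by
    rw [hu0def]
    have h2e : (2:ℝ) + ε ≠ 0 := by linarith
    have h1 : 1 - ε / (2 + ε) = 2 / (2 + ε) := by field_simp; ring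
    rw [h1, one_div_div]
    ring
  have hsmall : Real.sqrt (2 / u0) * s < ε / 2 := by
    rw [hsdef, ← Real.sqrt_mul (by positivity : (0:ℝ) ≤ 2 / u0)]
    rw [show Real.sqrt (2 / u0 * x) < ε / 2 ↔ 2 / u0 * x < (ε/2)^2 from
      Real.sqrt_lt' (half_pos hε)]
    have h4 : 4 * E * p < ε ^ 2 * u0 / 4 := by
      have := mul_lt_mul_of_pos_left hpd (by positivity : (0:ℝ) < 4 * E)
      have hE16 : (4 * E) * (ε ^ 2 * u0 / (16 * E)) = ε ^ 2 * u0 / 4 := by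
        field_simp; ring
      calc 4 * E * p = (4 * E) * p := by ring
      _ < (4 * E) * (ε ^ 2 * u0 / (16 * E)) := this
      _ = ε ^ 2 * u0 / 4 := hE16
    have heq : 2 / u0 * x = 4 * E * p / u0 := by rw [hxdef]; field_simp; ring
    rw [heq, div_lt_iff₀ hu0]
    nlinarith
  have hfup : omegaFun p * s < 1 + ε := by
    have h1 : omegaFun p * s ≤ (Real.sqrt (2 / u0) + c * (1 / (1 - u0))) * s :=
      mul_le_mul_of_nonneg_right hup hs0.le
    have h2 : (Real.sqrt (2 / u0) + c * (1 / (1 - u0))) * s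
        = Real.sqrt (2 / u0) * s + (c * s) * (1 / (1 - u0)) := by ring
    rw [h2, hcs, one_mul, hinv] at h1
    linarith
  rw [Real.dist_eq, abs_lt]
  constructor <;> linarith
end

section
/- Let (τ_k)_{k≥1} be i.i.d. nonnegative real random variables and A_{2i+1} := τ_1 + Σ_{k=1}^{i}(τ_{2k+1} - τ_{2k}). Then for every i ≥ 0 and x ∈ ℝ, P( max_{1 ≤ l ≤ 2i+1} A_l ≥ x ) ≤ 2·P( A_{2i+1} ≥ x ), where A_l = Σ_{k=1}^{l}(-1)^{k-1} τ_k. -/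
open MeasureTheory ProbabilityTheory
open scoped ENNReal

namespace Stmt7Aux

variable {Ω : Type*} [MeasureSpace Ω] [IsProbabilityMeasure (ℙ : Measure Ω)]
    {τ : ℕ → Ω → ℝ}

/-- the alternating partial sum -/
noncomputable def AltS (τ : ℕ → Ω → ℝ) (l : ℕ) (ω : Ω) : ℝ :=
  ∑ k ∈ Finset.range l, (-1 : ℝ) ^ k * τ (k + 1) ω

/-- the remaining increments -/
noncomputable def Dd (τ : ℕ → Ω → ℝ) (i j : ℕ) (ω : Ω) : ℝ :=
  ∑ m ∈ Finset.Ico j i, (τ (2*m+3) ω - τ (2*m+2) ω)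

omit [MeasureSpace Ω] [IsProbabilityMeasure (ℙ : Measure Ω)] in
lemma key_decomp {j : ℕ} (n : ℕ) (hn : j ≤ n) (ω : Ω) :
    AltS τ (2*n+1) ω = AltS τ (2*j+1) ω + Dd τ n j ω := by
  induction n, hn using Nat.le_induction with
  | base => simp [Dd]
  | succ n hn ih =>
    have e1 : (-1 : ℝ) ^ (2*n+1) = -1 := Odd.neg_one_pow ⟨n, by ring⟩
    have e2 : (-1 : ℝ) ^ (2*n+1+1) = 1 := Even.neg_one_pow ⟨n+1, by ring⟩
    simp only [AltS, Dd] at ih ⊢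
    rw [show 2*(n+1)+1 = 2*n+1+1+1 from by ring, Finset.sum_range_succ,
      Finset.sum_range_succ, Finset.sum_Ico_succ_top hn, ih, e1, e2]
    rw [show 2*n+1+1 = 2*n+2 from by ring, show 2*n+1+1+1 = 2*n+3 from by ring]
    ring

/-- restricted sum of differences -/
noncomputable def psum (t T : Finset ℕ) (c d : ℕ → ℕ) (w : ↥T → ℝ) : ℝ :=
  ∑ m ∈ t, ((if h : c m ∈ T then w ⟨c m, h⟩ else 0) -
    (if h : d m ∈ T then w ⟨d m, h⟩ else 0))

lemma measurable_psum (t T : Finset ℕ) (c d : ℕ → ℕ) : Measurable (psum t T c d) := by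
  apply Finset.measurable_sum
  intro m _
  apply Measurable.sub <;>
  · split_ifs with h
    · exact measurable_pi_apply _
    · exact measurable_const

omit [MeasureSpace Ω] [IsProbabilityMeasure (ℙ : Measure Ω)] in
lemma psum_apply {t T : Finset ℕ} {c d : ℕ → ℕ} (hc : ∀ m ∈ t, c m ∈ T)
    (hd : ∀ m ∈ t, d m ∈ T) (ω : Ω) :
    psum t T c d (fun k : ↥T => τ k ω) = ∑ m ∈ t, (τ (c m) ω - τ (d m) ω) := by
  refine Finset.sum_congr rfl fun m hm => ?_
  rw [dif_pos (hc m hm), dif_pos (hd m hm)]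

lemma indep_psum (hmeas : ∀ k, Measurable (τ k))
    (hindep : iIndepFun τ ℙ)
    (t₁ t₂ : Finset ℕ) (c₁ d₁ c₂ d₂ : ℕ → ℕ) (T₁ T₂ : Finset ℕ) (hT : Disjoint T₁ T₂)
    (hc₁ : ∀ m ∈ t₁, c₁ m ∈ T₁) (hd₁ : ∀ m ∈ t₁, d₁ m ∈ T₁)
    (hc₂ : ∀ m ∈ t₂, c₂ m ∈ T₂) (hd₂ : ∀ m ∈ t₂, d₂ m ∈ T₂) :
    IndepFun (fun ω => ∑ m ∈ t₁, (τ (c₁ m) ω - τ (d₁ m) ω))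
      (fun ω => ∑ m ∈ t₂, (τ (c₂ m) ω - τ (d₂ m) ω)) ℙ := by
  have h := (hindep.indepFun_finset T₁ T₂ hT hmeas).comp
    (measurable_psum t₁ T₁ c₁ d₁) (measurable_psum t₂ T₂ c₂ d₂)
  have e₁ : (fun ω => ∑ m ∈ t₁, (τ (c₁ m) ω - τ (d₁ m) ω)) =
      (psum t₁ T₁ c₁ d₁) ∘ (fun ω (k : ↥T₁) => τ k ω) :=
    funext fun ω => (psum_apply hc₁ hd₁ ω).symm
  have e₂ : (fun ω => ∑ m ∈ t₂, (τ (c₂ m) ω - τ (d₂ m) ω)) =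
      (psum t₂ T₂ c₂ d₂) ∘ (fun ω (k : ↥T₂) => τ k ω) :=
    funext fun ω => (psum_apply hc₂ hd₂ ω).symm
  rw [e₁, e₂]
  exact h

lemma aux_pair (hmeas : ∀ k, Measurable (τ k))
    (hindep : iIndepFun τ ℙ)
    (hident : ∀ k, IdentDistrib (τ k) (τ 1) ℙ ℙ)
    {a b : ℕ} (hab : a ≠ b) :
    IdentDistrib (fun ω => (τ a ω, τ b ω)) (fun ω => (τ b ω, τ a ω)) ℙ ℙ := by
  have h1 : IndepFun (τ a) (τ b) ℙ := hindep.indepFun hab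
  have h2 : IndepFun (τ b) (τ a) ℙ := hindep.indepFun hab.symm
  refine ⟨((hmeas a).prodMk (hmeas b)).aemeasurable,
    ((hmeas b).prodMk (hmeas a)).aemeasurable, ?_⟩
  rw [(indepFun_iff_map_prod_eq_prod_map_map (hmeas a).aemeasurable
      (hmeas b).aemeasurable).mp h1,
    (indepFun_iff_map_prod_eq_prod_map_map (hmeas b).aemeasurable
      (hmeas a).aemeasurable).mp h2,
    (hident a).map_eq, (hident b).map_eq]

/-- symmetry of the sum of increments -/
lemma aux_sym (hmeas : ∀ k, Measurable (τ k))
    (hindep : iIndepFun τ ℙ)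
    (hident : ∀ k, IdentDistrib (τ k) (τ 1) ℙ ℙ) (s : Finset ℕ) :
    IdentDistrib (fun ω => ∑ m ∈ s, (τ (2*m+3) ω - τ (2*m+2) ω))
      (fun ω => ∑ m ∈ s, (τ (2*m+2) ω - τ (2*m+3) ω)) ℙ ℙ := by
  classical
  induction s using Finset.cons_induction with
  | empty => simpa using IdentDistrib.refl aemeasurable_const
  | cons a t ha ih =>
    have mX : ∀ (c d : ℕ → ℕ) (u : Finset ℕ),
        Measurable (fun ω => ∑ m ∈ u, (τ (c m) ω - τ (d m) ω)) :=
      fun c d u => Finset.measurable_sum _ fun m _ => (hmeas (c m)).sub (hmeas (d m))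
    have hpair : IdentDistrib (fun ω => τ (2*a+3) ω - τ (2*a+2) ω)
        (fun ω => τ (2*a+2) ω - τ (2*a+3) ω) ℙ ℙ :=
      (aux_pair hmeas hindep hident (show 2*a+3 ≠ 2*a+2 by omega)).comp
        (measurable_fst.sub measurable_snd)
    have hTdisj : Disjoint ({2*a+2, 2*a+3} : Finset ℕ)
        (t.biUnion fun m => {2*m+2, 2*m+3}) := by
      simp only [Finset.disjoint_left, Finset.mem_insert, Finset.mem_singleton,
        Finset.mem_biUnion]
      rintro k hk ⟨m, hm, hk2⟩
      have hma : m ≠ a := fun h => ha (h ▸ hm)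
      rcases hk with rfl | rfl <;> rcases hk2 with h | h <;> omega
    have hc₂ : ∀ m ∈ t, 2*m+3 ∈ t.biUnion fun m => ({2*m+2, 2*m+3} : Finset ℕ) :=
      fun m hm => Finset.mem_biUnion.mpr ⟨m, hm, by simp⟩
    have hd₂ : ∀ m ∈ t, 2*m+2 ∈ t.biUnion fun m => ({2*m+2, 2*m+3} : Finset ℕ) :=
      fun m hm => Finset.mem_biUnion.mpr ⟨m, hm, by simp⟩
    have hInd : IndepFun (fun ω => ∑ m ∈ ({a} : Finset ℕ), (τ (2*m+3) ω - τ (2*m+2) ω))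
        (fun ω => ∑ m ∈ t, (τ (2*m+3) ω - τ (2*m+2) ω)) ℙ :=
      indep_psum hmeas hindep {a} t _ _ _ _ {2*a+2, 2*a+3} _ hTdisj
        (by simp) (by simp) hc₂ hd₂
    have hInd' : IndepFun (fun ω => ∑ m ∈ ({a} : Finset ℕ), (τ (2*m+2) ω - τ (2*m+3) ω))
        (fun ω => ∑ m ∈ t, (τ (2*m+2) ω - τ (2*m+3) ω)) ℙ :=
      indep_psum hmeas hindep {a} t _ _ _ _ {2*a+2, 2*a+3} _ hTdisj
        (by simp) (by simp) hd₂ hc₂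
    simp only [Finset.sum_singleton] at hInd hInd'
    have hXa : Measurable (fun ω => τ (2*a+3) ω - τ (2*a+2) ω) :=
      (hmeas _).sub (hmeas _)
    have hXa' : Measurable (fun ω => τ (2*a+2) ω - τ (2*a+3) ω) :=
      (hmeas _).sub (hmeas _)
    have hprod : IdentDistrib
        (fun ω => (τ (2*a+3) ω - τ (2*a+2) ω, ∑ m ∈ t, (τ (2*m+3) ω - τ (2*m+2) ω)))
        (fun ω => (τ (2*a+2) ω - τ (2*a+3) ω, ∑ m ∈ t, (τ (2*m+2) ω - τ (2*m+3) ω))) ℙ ℙ := by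
      refine ⟨(hXa.prodMk (mX _ _ t)).aemeasurable,
        (hXa'.prodMk (mX _ _ t)).aemeasurable, ?_⟩
      rw [(indepFun_iff_map_prod_eq_prod_map_map hXa.aemeasurable
          (mX _ _ t).aemeasurable).mp hInd,
        (indepFun_iff_map_prod_eq_prod_map_map hXa'.aemeasurable
          (mX _ _ t).aemeasurable).mp hInd', hpair.map_eq, ih.map_eq]
    have h := hprod.comp (measurable_fst.add measurable_snd)
    have ee : ∀ c d : ℕ → ℕ,
        (fun ω => ∑ m ∈ Finset.cons a t ha, (τ (c m) ω - τ (d m) ω)) =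
        fun ω => (τ (c a) ω - τ (d a) ω) + ∑ m ∈ t, (τ (c m) ω - τ (d m) ω) := by
      intro c d
      funext ω
      rw [Finset.sum_cons]
    rw [ee (fun m => 2*m+3) (fun m => 2*m+2), ee (fun m => 2*m+2) (fun m => 2*m+3)]
    exact h

end Stmt7Aux

open Stmt7Aux

theorem stmt_7 {Ω : Type*} [MeasureSpace Ω] [IsProbabilityMeasure (ℙ : Measure Ω)]
    (τ : ℕ → Ω → ℝ)
    (hmeas : ∀ k, Measurable (τ k))
    (hindep : iIndepFun τ ℙ)
    (hident : ∀ k, IdentDistrib (τ k) (τ 1) ℙ ℙ)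
    (hnonneg : ∀ k ω, 0 ≤ τ k ω) :
    ∀ (i : ℕ) (x : ℝ),
      ℙ {ω | ∃ l ∈ Finset.Icc 1 (2 * i + 1),
          x ≤ ∑ k ∈ Finset.range l, (-1 : ℝ) ^ k * τ (k + 1) ω}
        ≤ 2 * ℙ {ω | x ≤ ∑ k ∈ Finset.range (2 * i + 1), (-1 : ℝ) ^ k * τ (k + 1) ω} := by
  intro i x
  classical
  have mA : ∀ l, Measurable (AltS τ l) :=
    fun l => Finset.measurable_sum _ fun k _ => measurable_const.mul (hmeas (k + 1))
  have mD : ∀ j, Measurable (Dd τ i j) :=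
    fun j => Finset.measurable_sum _ fun m _ => (hmeas _).sub (hmeas _)
  -- events
  let E : ℕ → Set Ω := fun j =>
    {ω | x ≤ AltS τ (2*j+1) ω ∧ ∀ m < j, AltS τ (2*m+1) ω < x}
  have mE : ∀ j, MeasurableSet (E j) := by
    intro j
    have hEeq : E j = {ω | x ≤ AltS τ (2*j+1) ω} ∩
        ⋂ m ∈ Finset.range j, {ω | AltS τ (2*m+1) ω < x} := by
      ext ω
      simp only [E, Set.mem_setOf_eq, Set.mem_inter_iff, Set.mem_iInter, Finset.mem_range]
    rw [hEeq]
    exact (measurableSet_le measurable_const (mA _)).inter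
      (Finset.measurableSet_biInter _ fun m _ => measurableSet_lt (mA _) measurable_const)
  -- per-j Lévy step
  have key2 : ∀ j ≤ i, ℙ (E j) ≤ 2 * ℙ (E j ∩ {ω | 0 ≤ Dd τ i j ω}) := by
    intro j hj
    set SL : Finset ℕ := Finset.range (2*j+2) with hSL
    set TR : Finset ℕ := Finset.Icc (2*j+2) (2*i+1) with hTR
    have hdisj : Disjoint SL TR := by
      simp only [Finset.disjoint_left, hSL, hTR, Finset.mem_range, Finset.mem_Icc]
      omega
    have hIndLT : IndepFun (fun ω (k : ↥SL) => τ k ω) (fun ω (k : ↥TR) => τ k ω) ℙ :=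
      hindep.indepFun_finset SL TR hdisj hmeas
    -- left functional
    set g : ℕ → (↥SL → ℝ) → ℝ := fun m v =>
      ∑ k ∈ Finset.range (2*m+1), (-1 : ℝ) ^ k *
        (if h : k + 1 ∈ SL then v ⟨k+1, h⟩ else 0) with hgdef
    have hg : ∀ m, Measurable (g m) := by
      intro m
      apply Finset.measurable_sum
      intro k _
      apply Measurable.const_mul
      split_ifs with h
      · exact measurable_pi_apply _
      · exact measurable_const
    have hgS : ∀ m ≤ j, ∀ ω, g m (fun k : ↥SL => τ k ω) = AltS τ (2*m+1) ω := by
      intro m hm ω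
      simp only [AltS]
      refine Finset.sum_congr rfl fun k hk => ?_
      have hk' : k < 2*m+1 := Finset.mem_range.mp hk
      rw [dif_pos (show k + 1 ∈ SL by rw [hSL]; exact Finset.mem_range.mpr (by omega))]
    -- right functional
    set ψ : (↥TR → ℝ) → ℝ :=
      psum (Finset.Ico j i) TR (fun m => 2*m+3) (fun m => 2*m+2) with hψdef
    have hcT : ∀ m ∈ Finset.Ico j i, 2*m+3 ∈ TR := by
      intro m hm; simp only [Finset.mem_Ico] at hm; simp only [hTR, Finset.mem_Icc]; omega
    have hdT : ∀ m ∈ Finset.Ico j i, 2*m+2 ∈ TR := by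
      intro m hm; simp only [Finset.mem_Ico] at hm; simp only [hTR, Finset.mem_Icc]; omega
    have hψap : ∀ ω, ψ (fun k : ↥TR => τ k ω) = Dd τ i j ω :=
      fun ω => psum_apply hcT hdT ω
    set Aset : Set (↥SL → ℝ) :=
      {v | x ≤ g j v} ∩ ⋂ m ∈ Finset.range j, {v | g m v < x} with hAdef
    have hAset : MeasurableSet Aset :=
      (measurableSet_le measurable_const (hg j)).inter
        (Finset.measurableSet_biInter _ fun m _ => measurableSet_lt (hg m) measurable_const)
    set Bset : Set (↥TR → ℝ) := {w | 0 ≤ ψ w} with hBdef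
    have hBset : MeasurableSet Bset :=
      measurableSet_le measurable_const (measurable_psum _ _ _ _)
    have hEj : E j = (fun ω (k : ↥SL) => τ k ω) ⁻¹' Aset := by
      ext ω
      simp only [E, Aset, Set.mem_setOf_eq, Set.mem_preimage, Set.mem_inter_iff,
        Set.mem_iInter, Finset.mem_range]
      constructor
      · rintro ⟨h1, h2⟩
        refine ⟨by rwa [hgS j le_rfl], fun m hm => ?_⟩
        rw [hgS m (le_of_lt hm)]
        exact h2 m hm
      · rintro ⟨h1, h2⟩
        refine ⟨by rwa [hgS j le_rfl] at h1, fun m hm => ?_⟩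
        have h3 := h2 m hm
        rwa [hgS m (le_of_lt hm)] at h3
    have hDj : {ω | 0 ≤ Dd τ i j ω} = (fun ω (k : ↥TR) => τ k ω) ⁻¹' Bset := by
      ext ω
      simp only [Bset, Set.mem_setOf_eq, Set.mem_preimage, hψap]
    have hmul : ℙ (E j ∩ {ω | 0 ≤ Dd τ i j ω}) = ℙ (E j) * ℙ {ω | 0 ≤ Dd τ i j ω} := by
      rw [hEj, hDj]
      exact hIndLT.measure_inter_preimage_eq_mul Aset Bset hAset hBset
    -- symmetry
    have hsym : IdentDistrib (Dd τ i j) (fun ω => -(Dd τ i j ω)) ℙ ℙ := by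
      have h := aux_sym hmeas hindep hident (Finset.Ico j i)
      have e : (fun ω => ∑ m ∈ Finset.Ico j i, (τ (2*m+2) ω - τ (2*m+3) ω)) =
          fun ω => -(Dd τ i j ω) := by
        funext ω
        simp only [Dd, ← Finset.sum_neg_distrib, neg_sub]
      rw [e] at h
      exact h
    have hps : ℙ {ω | 0 ≤ Dd τ i j ω} = ℙ {ω | Dd τ i j ω ≤ 0} := by
      have h := hsym.measure_mem_eq (measurableSet_Ici (a := (0:ℝ)))
      simpa only [Set.preimage, Set.mem_Ici, neg_nonneg] using h
    have hone : (1 : ℝ≥0∞) ≤ 2 * ℙ {ω | 0 ≤ Dd τ i j ω} := by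
      have huniv : (Set.univ : Set Ω) ⊆ {ω | 0 ≤ Dd τ i j ω} ∪ {ω | Dd τ i j ω ≤ 0} := by
        intro ω _
        by_cases h : 0 ≤ Dd τ i j ω
        · exact Or.inl h
        · exact Or.inr (le_of_not_ge h)
      calc (1 : ℝ≥0∞) = ℙ (Set.univ : Set Ω) := measure_univ.symm
        _ ≤ ℙ ({ω | 0 ≤ Dd τ i j ω} ∪ {ω | Dd τ i j ω ≤ 0}) := measure_mono huniv
        _ ≤ ℙ {ω | 0 ≤ Dd τ i j ω} + ℙ {ω | Dd τ i j ω ≤ 0} := measure_union_le _ _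
        _ = 2 * ℙ {ω | 0 ≤ Dd τ i j ω} := by rw [← hps, two_mul]
    calc ℙ (E j) = ℙ (E j) * 1 := (mul_one _).symm
      _ ≤ ℙ (E j) * (2 * ℙ {ω | 0 ≤ Dd τ i j ω}) := mul_le_mul_right hone _
      _ = 2 * (ℙ (E j) * ℙ {ω | 0 ≤ Dd τ i j ω}) := by ring
      _ = 2 * ℙ (E j ∩ {ω | 0 ≤ Dd τ i j ω}) := by rw [hmul]
  -- per-j inequality against the final event
  let F : Set Ω := {ω | x ≤ AltS τ (2*i+1) ω}
  have key3 : ∀ j ≤ i, ℙ (E j) ≤ 2 * ℙ (E j ∩ F) := by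
    intro j hj
    refine (key2 j hj).trans ?_
    refine mul_le_mul_right (measure_mono ?_) _
    rintro ω ⟨hEω, hDω⟩
    refine ⟨hEω, ?_⟩
    have hdec := key_decomp (τ := τ) i hj ω
    have hx : x ≤ AltS τ (2*j+1) ω := hEω.1
    simp only [F, Set.mem_setOf_eq]
    simp only [Set.mem_setOf_eq] at hDω
    linarith
  -- the union bound
  have hsub : {ω | ∃ l ∈ Finset.Icc 1 (2 * i + 1),
      x ≤ ∑ k ∈ Finset.range l, (-1 : ℝ) ^ k * τ (k + 1) ω} ⊆
      ⋃ j ∈ Finset.range (i+1), E j := by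
    rintro ω ⟨l, hl, hxl⟩
    simp only [Finset.mem_Icc] at hl
    have hxA : x ≤ AltS τ l ω := hxl
    obtain ⟨j, hji, hxS⟩ : ∃ j ≤ i, x ≤ AltS τ (2*j+1) ω := by
      rcases Nat.even_or_odd l with he | ho
      · obtain ⟨m, rfl⟩ := he
        refine ⟨m, by omega, ?_⟩
        have hst : AltS τ (2*m+1) ω = AltS τ (m+m) ω + (-1 : ℝ) ^ (m+m) * τ (m+m+1) ω := by
          simp only [AltS]
          rw [show 2*m+1 = (m+m)+1 from by ring, Finset.sum_range_succ]
        have hAS : AltS τ (m+m) ω ≤ AltS τ (2*m+1) ω := by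
          rw [hst, Even.neg_one_pow ⟨m, rfl⟩, one_mul]
          have hn := hnonneg (m+m+1) ω
          linarith
        linarith
      · obtain ⟨m, rfl⟩ := ho
        exact ⟨m, by omega, hxA⟩
    have hex : ∃ j, x ≤ AltS τ (2*j+1) ω := ⟨j, hxS⟩
    have hfind_le : Nat.find hex ≤ i := le_trans (Nat.find_le hxS) hji
    refine Set.mem_biUnion (Finset.mem_range.mpr (Nat.lt_succ_of_le hfind_le)) ?_
    exact ⟨Nat.find_spec hex, fun m hm => lt_of_not_ge (Nat.find_min hex hm)⟩
  have hdisE : ∀ u v : ℕ, u < v → Disjoint (E u) (E v) := by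
    intro u v huv
    rw [Set.disjoint_left]
    rintro ω ⟨h1, _⟩ ⟨_, h2⟩
    exact absurd h1 (not_le.mpr (h2 u huv))
  have hdis : (↑(Finset.range (i+1)) : Set ℕ).PairwiseDisjoint fun j => E j ∩ F := by
    intro a _ b _ hab
    rcases lt_or_gt_of_ne hab with h' | h'
    · exact (hdisE a b h').mono Set.inter_subset_left Set.inter_subset_left
    · exact ((hdisE b a h').symm).mono Set.inter_subset_left Set.inter_subset_left
  have mEF : ∀ j ∈ Finset.range (i+1), MeasurableSet (E j ∩ F) :=
    fun j _ => (mE j).inter (measurableSet_le measurable_const (mA _))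
  calc ℙ {ω | ∃ l ∈ Finset.Icc 1 (2 * i + 1),
        x ≤ ∑ k ∈ Finset.range l, (-1 : ℝ) ^ k * τ (k + 1) ω}
      ≤ ℙ (⋃ j ∈ Finset.range (i+1), E j) := measure_mono hsub
    _ ≤ ∑ j ∈ Finset.range (i+1), ℙ (E j) := measure_biUnion_finset_le _ _
    _ ≤ ∑ j ∈ Finset.range (i+1), 2 * ℙ (E j ∩ F) :=
        Finset.sum_le_sum fun j hj => key3 j (by
          have := Finset.mem_range.mp hj; omega)
    _ = 2 * ∑ j ∈ Finset.range (i+1), ℙ (E j ∩ F) := by rw [Finset.mul_sum]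
    _ = 2 * ℙ (⋃ j ∈ Finset.range (i+1), (E j ∩ F)) := by
        rw [measure_biUnion_finset hdis mEF]
    _ ≤ 2 * ℙ F := by
        gcongr
        exact Set.iUnion₂_subset fun j _ => Set.inter_subset_right
end

section
/- Let (E_n)_{n≥1} be events in a probability space such that there is a constant C > 0 with P(E_n ∩ E_k) ≤ C·P(E_k)·P(E_{n-k-1}) for all n > k ≥ 1 (with the convention that P(E_0) is some fixed finite bound), and suppose Σ_n P(E_n) = ∞. Then the sequence S_n := (Σ_{k=1}^n 1_{E_k}) / (Σ_{k=1}^n P(E_k)) is bounded in L², and consequently P(E_n occurs for infinitely many n) > 0. -/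
open MeasureTheory ProbabilityTheory Filter Finset Topology

noncomputable def aaKS {Ω : Type*} [MeasureSpace Ω] (E : ℕ → Set Ω) (n : ℕ) : ℝ :=
  ∑ k ∈ Finset.Icc 1 n, (ℙ (E k)).toReal

noncomputable def TTKS {Ω : Type*} (E : ℕ → Set Ω) (n : ℕ) (ω : Ω) : ℝ :=
  ∑ k ∈ Finset.Icc 1 n, Set.indicator (E k) (fun _ => (1 : ℝ)) ω

section aux
variable {Ω : Type*} [MeasureSpace Ω] [IsProbabilityMeasure (ℙ : Measure Ω)]
  (E : ℕ → Set Ω)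

lemma TTKS_nonneg (n : ℕ) (ω : Ω) : 0 ≤ TTKS E n ω :=
  Finset.sum_nonneg fun k _ => Set.indicator_nonneg (fun _ _ => zero_le_one) ω

lemma aaKS_nonneg (n : ℕ) : 0 ≤ aaKS E n :=
  Finset.sum_nonneg fun k _ => ENNReal.toReal_nonneg

lemma aaKS_mono : Monotone (aaKS E) := fun m n h =>
  Finset.sum_le_sum_of_subset_of_nonneg (Finset.Icc_subset_Icc_right h)
    (fun k _ _ => ENNReal.toReal_nonneg)

lemma TTKS_measurable (hmeas : ∀ n, MeasurableSet (E n)) (n : ℕ) :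
    Measurable (TTKS E n) :=
  Finset.measurable_sum _ fun k _ => (measurable_const.indicator (hmeas k))

lemma TTKS_integrable (hmeas : ∀ n, MeasurableSet (E n)) (n : ℕ) :
    Integrable (TTKS E n) ℙ :=
  integrable_finset_sum _ fun k _ => (integrable_const (1 : ℝ)).indicator (hmeas k)

lemma TTKS_integral (hmeas : ∀ n, MeasurableSet (E n)) (n : ℕ) :
    ∫ ω, TTKS E n ω ∂ℙ = aaKS E n := by
  rw [show TTKS E n = fun ω => ∑ k ∈ Finset.Icc 1 n, Set.indicator (E k) (fun _ => (1:ℝ)) ω from rfl, integral_finset_sum _ (fun k _ => (integrable_const (1:ℝ)).indicator (hmeas k))]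
  exact Finset.sum_congr rfl fun k _ => by
    rw [integral_indicator_const (1:ℝ) (hmeas k), smul_eq_mul, mul_one, measureReal_def]

lemma TTKS_sq (n : ℕ) (ω : Ω) :
    (TTKS E n ω)^2
      = ∑ j ∈ Finset.Icc 1 n, ∑ k ∈ Finset.Icc 1 n,
          Set.indicator (E j ∩ E k) (fun _ => (1:ℝ)) ω := by
  rw [TTKS, sq, Finset.sum_mul_sum]
  refine Finset.sum_congr rfl fun j _ => Finset.sum_congr rfl fun k _ => ?_
  rw [← Set.inter_indicator_mul, one_mul]

lemma TTKS_sq_fun (n : ℕ) :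
    (fun ω => (TTKS E n ω)^2)
      = fun ω => ∑ j ∈ Finset.Icc 1 n, ∑ k ∈ Finset.Icc 1 n,
          Set.indicator (E j ∩ E k) (fun _ => (1:ℝ)) ω :=
  funext (TTKS_sq E n)

lemma TTKS_sq_integrable (hmeas : ∀ n, MeasurableSet (E n)) (n : ℕ) :
    Integrable (fun ω => (TTKS E n ω)^2) ℙ := by
  rw [TTKS_sq_fun]
  exact integrable_finset_sum _ fun j _ => integrable_finset_sum _ fun k _ =>
    (integrable_const (1 : ℝ)).indicator ((hmeas j).inter (hmeas k))

lemma TTKS_sq_integral (hmeas : ∀ n, MeasurableSet (E n)) (n : ℕ) :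
    ∫ ω, (TTKS E n ω)^2 ∂ℙ
      = ∑ j ∈ Finset.Icc 1 n, ∑ k ∈ Finset.Icc 1 n, (ℙ (E j ∩ E k)).toReal := by
  rw [TTKS_sq_fun,
    integral_finset_sum _ (fun j _ => integrable_finset_sum _ fun k _ =>
      (integrable_const (1 : ℝ)).indicator ((hmeas j).inter (hmeas k)))]
  refine Finset.sum_congr rfl fun j _ => ?_
  rw [integral_finset_sum _ (fun k _ => (integrable_const (1:ℝ)).indicator
    ((hmeas j).inter (hmeas k)))]
  exact Finset.sum_congr rfl fun k _ => by
    rw [integral_indicator_const (1:ℝ) ((hmeas j).inter (hmeas k)), smul_eq_mul, mul_one, measureReal_def]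

lemma TTKS_le_sq (n : ℕ) (ω : Ω) : TTKS E n ω ≤ (TTKS E n ω)^2 := by
  classical
  have h : TTKS E n ω = (((Finset.Icc 1 n).filter (fun k => ω ∈ E k)).card : ℝ) := by
    rw [TTKS, Finset.card_filter]
    push_cast
    exact Finset.sum_congr rfl fun k _ => Set.indicator_apply _ _ _
  rw [h]
  have : (((Finset.Icc 1 n).filter (fun k => ω ∈ E k)).card : ℝ)
      ≤ ((((Finset.Icc 1 n).filter (fun k => ω ∈ E k)).card : ℝ))^2 := by
    set m := ((Finset.Icc 1 n).filter (fun k => ω ∈ E k)).card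
    have : m ≤ m^2 := Nat.le_self_pow two_ne_zero m
    exact_mod_cast this
  exact this

lemma TTKS_le_of_not_mem (ω : Ω) (K : ℕ) (hK : ∀ k, K ≤ k → ω ∉ E k) (n : ℕ) :
    TTKS E n ω ≤ K := by
  classical
  have h1 : ∀ k ∈ Finset.Icc 1 n,
      Set.indicator (E k) (fun _ => (1:ℝ)) ω ≤ if k < K then 1 else 0 := by
    intro k _
    rw [Set.indicator_apply]
    split_ifs with h1 h2 h3
    · exact le_refl 1
    · exact absurd h1 (hK k (not_lt.1 h2))
    · exact zero_le_one
    · exact le_refl 0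
  calc TTKS E n ω ≤ ∑ k ∈ Finset.Icc 1 n, if k < K then (1:ℝ) else 0 :=
        Finset.sum_le_sum h1  -- defeq TTKS
    _ = (((Finset.Icc 1 n).filter (fun k => k < K)).card : ℝ) := by
        rw [Finset.sum_boole]
    _ ≤ K := by
        have hsub : (Finset.Icc 1 n).filter (fun k => k < K) ⊆ Finset.range K := by
          intro x hx
          simp only [Finset.mem_filter, Finset.mem_range] at hx ⊢
          exact hx.2
        have := Finset.card_le_card hsub
        rw [Finset.card_range] at this
        exact_mod_cast this

end aux

lemma doublesumKS (p : ℕ → ℝ) (q : ℕ → ℕ → ℝ) (C : ℝ) (n : ℕ)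
    (hp0 : ∀ k, 0 ≤ p k) (hp1 : p 0 ≤ 1)
    (hdiag : ∀ j, q j j = p j) (hsym : ∀ j k, q j k = q k j)
    (hcorr : ∀ j k, 1 ≤ k → k < j → q j k ≤ C * p k * p (j - k - 1))
    (hC : 0 ≤ C) :
    ∑ j ∈ Finset.Icc 1 n, ∑ k ∈ Finset.Icc 1 n, q j k
      ≤ (∑ k ∈ Finset.Icc 1 n, p k)
        + 2 * C * (1 + ∑ k ∈ Finset.Icc 1 n, p k) * (∑ k ∈ Finset.Icc 1 n, p k) := by
  simp only [← Finset.Ico_add_one_right_eq_Icc]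
  set a := ∑ k ∈ Finset.Ico 1 (n+1), p k with ha
  have ha0 : 0 ≤ a := Finset.sum_nonneg fun k _ => hp0 k
  have hsplit : ∀ j ∈ Finset.Ico 1 (n+1),
      ∑ k ∈ Finset.Ico 1 (n+1), q j k
        = (∑ k ∈ Finset.Ico 1 j, q j k) + p j + ∑ k ∈ Finset.Ico (j+1) (n+1), q j k := by
    intro j hj
    rw [Finset.mem_Ico] at hj
    rw [← Finset.sum_Ico_consecutive _ hj.1 (le_of_lt hj.2),
        Finset.sum_eq_sum_Ico_succ_bot hj.2, hdiag j]
    ring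
  rw [Finset.sum_congr rfl hsplit, Finset.sum_add_distrib, Finset.sum_add_distrib]
  have hthird : ∑ j ∈ Finset.Ico 1 (n+1), ∑ k ∈ Finset.Ico (j+1) (n+1), q j k
      = ∑ j ∈ Finset.Ico 1 (n+1), ∑ k ∈ Finset.Ico 1 j, q j k := by
    calc ∑ j ∈ Finset.Ico 1 (n+1), ∑ k ∈ Finset.Ico (j+1) (n+1), q j k
        = ∑ j ∈ Finset.Ico 1 (n+1), ∑ k ∈ Finset.Ico (j+1) (n+1), q k j :=
          Finset.sum_congr rfl fun j _ => Finset.sum_congr rfl fun k _ => hsym j k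
      _ = ∑ j ∈ Finset.Ico 1 (n+1), ∑ k ∈ Finset.Ico 1 j, q j k :=
          Finset.sum_Ico_Ico_comm' 1 (n+1) fun i j => q j i
  have hfirst : ∑ j ∈ Finset.Ico 1 (n+1), ∑ k ∈ Finset.Ico 1 j, q j k
      ≤ C * (1 + a) * a := by
    have h1 : ∑ j ∈ Finset.Ico 1 (n+1), ∑ k ∈ Finset.Ico 1 j, q j k
        ≤ ∑ j ∈ Finset.Ico 1 (n+1), ∑ k ∈ Finset.Ico 1 j, C * p k * p (j - k - 1) := by
      refine Finset.sum_le_sum fun j _ => Finset.sum_le_sum fun k hk => ?_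
      rw [Finset.mem_Ico] at hk
      exact hcorr j k hk.1 hk.2
    have h2 : ∑ j ∈ Finset.Ico 1 (n+1), ∑ k ∈ Finset.Ico 1 j, C * p k * p (j - k - 1)
        = ∑ k ∈ Finset.Ico 1 (n+1), ∑ j ∈ Finset.Ico (k+1) (n+1), C * p k * p (j - k - 1) :=
      (Finset.sum_Ico_Ico_comm' 1 (n+1) fun k j => C * p k * p (j - k - 1)).symm
    have h3 : ∀ k : ℕ, ∑ j ∈ Finset.Ico (k+1) (n+1), p (j - k - 1) ≤ 1 + a := by
      intro k
      rw [Finset.sum_Ico_eq_sum_range]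
      have e1 : ∑ m ∈ Finset.range (n+1 - (k+1)), p (k+1+m - k - 1)
          = ∑ m ∈ Finset.range (n+1 - (k+1)), p m :=
        Finset.sum_congr rfl fun m _ => by congr 1; omega
      rw [e1]
      have e2 : ∑ m ∈ Finset.range (n+1-(k+1)), p m ≤ ∑ m ∈ Finset.range (n+1), p m :=
        Finset.sum_le_sum_of_subset_of_nonneg
          (Finset.range_subset_range.2 (by omega)) (fun m _ _ => hp0 m)
      have e3 : ∑ m ∈ Finset.range (n+1), p m = p 0 + a := by
        rw [Finset.range_eq_Ico, Finset.sum_eq_sum_Ico_succ_bot (by omega : 0 < n+1)]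
      linarith
    calc ∑ j ∈ Finset.Ico 1 (n+1), ∑ k ∈ Finset.Ico 1 j, q j k
        ≤ ∑ k ∈ Finset.Ico 1 (n+1), ∑ j ∈ Finset.Ico (k+1) (n+1), C * p k * p (j - k - 1) := by
          rw [← h2]; exact h1
      _ = ∑ k ∈ Finset.Ico 1 (n+1), C * p k * ∑ j ∈ Finset.Ico (k+1) (n+1), p (j - k - 1) := by
          refine Finset.sum_congr rfl fun k _ => ?_
          rw [Finset.mul_sum]
      _ ≤ ∑ k ∈ Finset.Ico 1 (n+1), C * p k * (1 + a) :=
          Finset.sum_le_sum fun k _ =>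
            mul_le_mul_of_nonneg_left (h3 k) (mul_nonneg hC (hp0 k))
      _ = C * (1 + a) * a := by
          rw [ha, Finset.mul_sum]
          exact Finset.sum_congr rfl fun k _ => by ring
  have h2C : 0 ≤ 2 * C * (1 + a) * a := by positivity
  linarith [hfirst, hthird.le, hthird.ge]

lemma aaKS_tendsto {Ω : Type*} [MeasureSpace Ω] [IsProbabilityMeasure (ℙ : Measure Ω)]
    (E : ℕ → Set Ω) (hdiv : ∑' n : ℕ, ℙ (E n) = ⊤) :
    Tendsto (aaKS E) atTop atTop := by
  have h0 : ℙ (E 0) ≠ ⊤ := measure_ne_top _ _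
  have htail : ∑' n : ℕ, ℙ (E (n+1)) = ⊤ := by
    rw [tsum_eq_zero_add' ENNReal.summable, ENNReal.add_eq_top] at hdiv
    exact hdiv.resolve_left h0
  have hten : Tendsto (fun n => ∑ i ∈ Finset.range n, ℙ (E (i+1))) atTop (𝓝 ⊤) := by
    rw [← htail]
    exact ENNReal.tendsto_nat_tsum _
  rw [tendsto_atTop]
  intro b
  obtain ⟨N, hN⟩ := exists_nat_ge b
  filter_upwards [ENNReal.tendsto_nhds_top_iff_nat.1 hten N] with n hn
  have hfin : ∑ i ∈ Finset.range n, ℙ (E (i+1)) ≠ ⊤ :=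
    (ENNReal.sum_lt_top.2 fun i _ => measure_lt_top _ _).ne
  have h2 : (N : ℝ) ≤ (∑ i ∈ Finset.range n, ℙ (E (i+1))).toReal := by
    have := ENNReal.toReal_mono hfin hn.le
    simpa using this
  have h3 : (∑ i ∈ Finset.range n, ℙ (E (i+1))).toReal = aaKS E n := by
    rw [ENNReal.toReal_sum (fun i _ => measure_ne_top _ _), aaKS,
      ← Finset.Ico_add_one_right_eq_Icc, Finset.sum_Ico_eq_sum_range]
    exact Finset.sum_congr rfl fun i _ => by rw [add_comm]
  rw [h3] at h2
  linarith
theorem stmt_13 {Ω : Type*} [MeasureSpace Ω] [IsProbabilityMeasure (ℙ : Measure Ω)]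
    (E : ℕ → Set Ω) (hmeas : ∀ n, MeasurableSet (E n))
    (C : ℝ) (hC : 0 < C)
    (hcorr : ∀ n k : ℕ, 1 ≤ k → k < n →
      (ℙ (E n ∩ E k)).toReal ≤ C * (ℙ (E k)).toReal * (ℙ (E (n - k - 1))).toReal)
    (hdiv : ∑' n : ℕ, ℙ (E n) = ⊤) :
    (∃ M : ℝ, ∀ n : ℕ, 1 ≤ n →
        (∫ ω, ((∑ k ∈ Finset.Icc 1 n, Set.indicator (E k) (fun _ => (1 : ℝ)) ω)
            / (∑ k ∈ Finset.Icc 1 n, (ℙ (E k)).toReal)) ^ 2 ∂ℙ) ≤ M) ∧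
      0 < ℙ (Filter.limsup E Filter.atTop) := by
  classical
  have hTm := TTKS_measurable E hmeas
  have hTint := TTKS_integrable E hmeas
  have hT2int := TTKS_sq_integrable E hmeas
  have hintT := TTKS_integral E hmeas
  have hamono := aaKS_mono E
  have hatend := aaKS_tendsto E hdiv
  have hS2 : ∀ n, ∫ ω, (TTKS E n ω)^2 ∂ℙ
      ≤ aaKS E n + 2*C*(1 + aaKS E n) * aaKS E n := by
    intro n
    rw [TTKS_sq_integral E hmeas n]
    refine doublesumKS (fun k => (ℙ (E k)).toReal) (fun j k => (ℙ (E j ∩ E k)).toReal) C n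
      (fun k => ENNReal.toReal_nonneg) ?_
      (fun j => show (ℙ (E j ∩ E j)).toReal = (ℙ (E j)).toReal by rw [Set.inter_self])
      (fun j k => show (ℙ (E j ∩ E k)).toReal = (ℙ (E k ∩ E j)).toReal by rw [Set.inter_comm]) (fun j k h1 h2 => hcorr j k h1 h2) hC.le
    exact ENNReal.toReal_le_of_le_ofReal one_pos.le (by simpa using prob_le_one)
  have hex : ∃ n, 0 < aaKS E n := by
    obtain ⟨n, hn⟩ := (hatend.eventually_ge_atTop 1).exists
    exact ⟨n, lt_of_lt_of_le one_pos hn⟩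
  have hn0 : 0 < aaKS E (Nat.find hex) := Nat.find_spec hex
  have hge : ∀ n, 0 < aaKS E n → aaKS E (Nat.find hex) ≤ aaKS E n := fun n h =>
    hamono (Nat.find_min' hex h)
  obtain ⟨D, hDdef⟩ : ∃ D : ℝ, D = (1 + 2*C) / aaKS E (Nat.find hex) + 2*C := ⟨_, rfl⟩
  have hD : 0 < D := by rw [hDdef]; positivity
  have hI2D : ∀ n, 0 < aaKS E n → ∫ ω, (TTKS E n ω)^2 ∂ℙ ≤ D * (aaKS E n)^2 := by
    intro n hna
    have h0 := hge n hna
    have hS := hS2 n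
    have hda : aaKS E n ≤ (aaKS E n)^2 / aaKS E (Nat.find hex) := by
      rw [le_div_iff₀ hn0]
      nlinarith
    have h1 : (1 + 2*C) * aaKS E n
        ≤ (1 + 2*C) * ((aaKS E n)^2 / aaKS E (Nat.find hex)) :=
      mul_le_mul_of_nonneg_left hda (by linarith)
    have hexp : D * (aaKS E n)^2
        = (1 + 2*C) * ((aaKS E n)^2 / aaKS E (Nat.find hex)) + 2*C*(aaKS E n)^2 := by
      rw [hDdef]
      field_simp
    have e : aaKS E n + 2*C*(1 + aaKS E n)*(aaKS E n)
        = (1+2*C)*aaKS E n + 2*C*(aaKS E n)^2 := by ring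
    nlinarith [hS, h1, hexp, e]
  refine ⟨⟨D, fun n hn => ?_⟩, ?_⟩
  · show ∫ ω, (TTKS E n ω / aaKS E n)^2 ∂ℙ ≤ D
    rcases lt_or_eq_of_le (aaKS_nonneg E n) with hpos | hzero
    · have hdiv2 : ∫ ω, (TTKS E n ω / aaKS E n)^2 ∂ℙ
          = (∫ ω, (TTKS E n ω)^2 ∂ℙ) / (aaKS E n)^2 := by
        simp_rw [div_pow]
        exact integral_div _ _
      rw [hdiv2, div_le_iff₀ (by positivity)]
      calc ∫ ω, (TTKS E n ω)^2 ∂ℙ ≤ D * (aaKS E n)^2 := hI2D n hpos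
        _ = D * aaKS E n ^ 2 := by ring
    · rw [← hzero]
      simp [div_zero]
      positivity
  · set B : ℕ → Set Ω := fun n => {ω | aaKS E n / 4 ≤ TTKS E n ω} with hBdef
    have hBmeas : ∀ n, MeasurableSet (B n) := fun n =>
      measurableSet_le measurable_const (hTm n)
    have hPZ : ∀ n, 0 < aaKS E n → 1/(2*D) ≤ (ℙ (B n)).toReal := by
      intro n hna
      have hAI2 : aaKS E n ≤ ∫ ω, (TTKS E n ω)^2 ∂ℙ := by
        rw [← hintT n]
        exact integral_mono (hTint n) (hT2int n) (TTKS_le_sq E n)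
      have hI2pos : (0:ℝ) < ∫ ω, (TTKS E n ω)^2 ∂ℙ := lt_of_lt_of_le hna hAI2
      set I2 := ∫ ω, (TTKS E n ω)^2 ∂ℙ with hI2def
      have hL : 0 < 2 * I2 / aaKS E n := by positivity
      have hpoint : ∀ ω, TTKS E n ω - (TTKS E n ω)^2 / (2 * I2 / aaKS E n)
          ≤ aaKS E n/4
            + ((2 * I2 / aaKS E n)/4) * Set.indicator (B n) (fun _ => (1:ℝ)) ω := by
        intro ω
        set L := 2 * I2 / aaKS E n
        by_cases h : ω ∈ B n
        · rw [Set.indicator_of_mem h]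
          have h3 : (L/4 - (TTKS E n ω - (TTKS E n ω)^2/L)) * L
              = (TTKS E n ω - L/2)^2 := by
            field_simp
            ring
          nlinarith [sq_nonneg (TTKS E n ω - L/2)]
        · rw [Set.indicator_of_notMem h, mul_zero, add_zero]
          have h4 : ¬ (aaKS E n/4 ≤ TTKS E n ω) := h
          push_neg at h4
          have h5 : 0 ≤ (TTKS E n ω)^2 / L := div_nonneg (sq_nonneg _) hL.le
          linarith
      have hIb : Integrable (Set.indicator (B n) (fun _ => (1:ℝ))) ℙ :=
        (integrable_const (1:ℝ)).indicator (hBmeas n)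
      have hfint : Integrable
          (fun ω => TTKS E n ω - (TTKS E n ω)^2 / (2 * I2 / aaKS E n)) ℙ :=
        (hTint n).sub ((hT2int n).div_const (2 * I2 / aaKS E n))
      have hgint : Integrable (fun ω => aaKS E n/4
          + ((2 * I2 / aaKS E n)/4) * Set.indicator (B n) (fun _ => (1:ℝ)) ω) ℙ :=
        (integrable_const (aaKS E n/4)).add (hIb.const_mul ((2 * I2 / aaKS E n)/4))
      have hle := integral_mono hfint hgint hpoint
      rw [integral_sub (hTint n) ((hT2int n).div_const _), integral_div, hintT n,
        integral_add (integrable_const _) (hIb.const_mul _), integral_const,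
        integral_const_mul, integral_indicator_const _ (hBmeas n)] at hle
      simp only [measureReal_def, measure_univ, ENNReal.toReal_one, smul_eq_mul, one_mul, mul_one] at hle
      rw [← hI2def] at hle
      have hIL : I2 / (2 * I2 / aaKS E n) = aaKS E n / 2 := by
        field_simp
      rw [hIL] at hle
      have h5 : aaKS E n ≤ (2 * I2 / aaKS E n) * (ℙ (B n)).toReal := by linarith
      have h6 : aaKS E n / (2 * I2 / aaKS E n) ≤ (ℙ (B n)).toReal :=
        (div_le_iff₀ hL).2 (by linarith)
      have h7 : aaKS E n / (2 * I2 / aaKS E n) = (aaKS E n)^2 / (2 * I2) := by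
        field_simp
      have h8 : 1/(2*D) ≤ (aaKS E n)^2/(2*I2) := by
        rw [div_le_div_iff₀ (by positivity) (by positivity)]
        have h9 := hI2D n hna
        rw [← hI2def] at h9
        nlinarith
      rw [h7] at h6
      linarith
    have hBlow : ∀ n, 0 < aaKS E n → ENNReal.ofReal (1/(2*D)) ≤ ℙ (B n) := fun n h =>
      ENNReal.ofReal_le_of_le_toReal (hPZ n h)
    have hsub : Filter.limsup B Filter.atTop ⊆ Filter.limsup E Filter.atTop := by
      intro ω hω
      rw [mem_limsup_iff_frequently_mem] at hω ⊢
      by_contra hcon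
      rw [Filter.not_frequently] at hcon
      obtain ⟨K, hK⟩ := Filter.eventually_atTop.1 hcon
      have hbd := TTKS_le_of_not_mem E ω K hK
      obtain ⟨n, hn1, hn2⟩ := (hω.and_eventually (hatend.eventually_gt_atTop (4*K))).exists
      have hn3 : aaKS E n / 4 ≤ TTKS E n ω := hn1
      have := hbd n
      linarith
    have hUlim : ENNReal.ofReal (1/(2*D)) ≤ ℙ (Filter.limsup B Filter.atTop) := by
      have hlimeq : Filter.limsup B Filter.atTop = ⋂ N, ⋃ n, ⋃ (_ : N ≤ n), B n := by
        rw [limsup_eq_iInf_iSup_of_nat]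
        simp only [Set.iInf_eq_iInter, Set.iSup_eq_iUnion]
      rw [hlimeq]
      have hUmeas : ∀ N : ℕ, NullMeasurableSet (⋃ n, ⋃ (_ : N ≤ n), B n) ℙ := fun N =>
        (MeasurableSet.iUnion fun n =>
          MeasurableSet.iUnion fun _ => hBmeas n).nullMeasurableSet
      have hsub2 : ∀ N m : ℕ, N ≤ m → B m ⊆ ⋃ n, ⋃ (_ : N ≤ n), B n := by
        intro N m hm ω hω
        exact Set.mem_iUnion.2 ⟨m, Set.mem_iUnion.2 ⟨hm, hω⟩⟩
      have hanti : Antitone (fun N => ⋃ n, ⋃ (_ : N ≤ n), B n) := fun N M h =>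
        Set.iUnion₂_subset fun n hn => hsub2 N n (h.trans hn)
      have htendU := tendsto_measure_iInter_atTop hUmeas hanti ⟨0, measure_ne_top _ _⟩
      refine ge_of_tendsto' htendU fun N => ?_
      have hm : 0 < aaKS E (max N (Nat.find hex)) :=
        lt_of_lt_of_le hn0 (hamono (le_max_right _ _))
      exact le_trans (hBlow _ hm)
        (measure_mono (hsub2 N (max N (Nat.find hex)) (le_max_left _ _)))
    exact lt_of_lt_of_le (ENNReal.ofReal_pos.2 (by positivity))
      (le_trans hUlim (measure_mono hsub))
end

section
/- Let (M_n) be a symmetric random walk whose jump characteristic function φ is nonnegative on [-p, p]. Then there exist universal constants 0 < m ≤ M such that for any λ > 2π/p and n ≥ 1: m·λ·∫_{-π/λ}^{π/λ} φ(t)ⁿ dt ≤ Q(M_n, λ) ≤ M·λ·∫_{-π/λ}^{π/λ} φ(t)ⁿ dt, where Q is the Lévy concentration function. -/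
open MeasureTheory ProbabilityTheory Set

noncomputable def essK (u : ℝ) : ℝ := if u = 0 then 1 else 2*(1 - Real.cos u)/u^2

lemma essK_nonneg (u : ℝ) : 0 ≤ essK u := by
  unfold essK
  split
  · norm_num
  · have h1 : Real.cos u ≤ 1 := Real.cos_le_one u
    apply div_nonneg (by linarith) (by positivity)

lemma essK_le_one (u : ℝ) : essK u ≤ 1 := by
  unfold essK
  split
  · exact le_refl 1
  · rename_i h
    have hu : (0:ℝ) < u^2 := by positivity
    rw [div_le_one hu]
    nlinarith [Real.one_sub_sq_div_two_le_cos (x := u)]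

lemma essK_le (u : ℝ) : essK u ≤ 5/(1+u^2) := by
  rcases le_or_gt (u^2) 4 with h | h
  · calc essK u ≤ 1 := essK_le_one u
      _ ≤ 5/(1+u^2) := by rw [le_div_iff₀ (by positivity)]; nlinarith
  · have hu : u ≠ 0 := by intro h0; rw [h0] at h; norm_num at h
    unfold essK
    rw [if_neg hu, div_le_div_iff₀ (by positivity) (by positivity)]
    nlinarith [Real.neg_one_le_cos u]

lemma essK_even (u : ℝ) : essK (-u) = essK u := by
  unfold essK
  simp [neg_eq_zero, Real.cos_neg, neg_pow]

lemma essK_half {u : ℝ} (h : |u| ≤ 1/2) : 1/2 ≤ essK u := by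
  wlog hu : 0 ≤ u generalizing u
  · rw [← essK_even]; exact this (by rwa [abs_neg]) (by linarith [not_le.1 hu])
  rcases eq_or_lt_of_le hu with h0 | h0
  · rw [← h0]; simp [essK]; norm_num
  have hu2 : u ≤ 1/2 := by rwa [abs_of_nonneg hu] at h
  have hs := Real.sin_gt_sub_cube (x := u/2) (by linarith)
  have hcos : Real.cos u = 1 - 2 * Real.sin (u/2)^2 := by
    have h1 := Real.cos_sq (u/2)
    have h2 := Real.sin_sq_add_cos_sq (u/2)
    have : 2 * (u/2) = u := by ring
    rw [this] at h1
    nlinarith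
  unfold essK
  rw [if_neg (ne_of_gt h0), le_div_iff₀ (by positivity)]
  have hv : u/2 ≤ 1/4 := by linarith
  have hv3 : (u/2)^3 ≤ (u/2) * (1/16) := by nlinarith [mul_nonneg (by linarith : (0:ℝ) ≤ u/2) (by nlinarith : (0:ℝ) ≤ 1/16 - (u/2)^2)]
  have hsge : (63/64) * (u/2) ≤ Real.sin (u/2) := by nlinarith
  have hsp : 0 ≤ Real.sin (u/2) := by nlinarith
  nlinarith [mul_le_mul hsge hsge (by nlinarith) hsp]

lemma measurable_essK : Measurable essK := by
  unfold essK
  exact Measurable.ite (measurableSet_singleton 0) measurable_const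
    (by measurability)

lemma essW_cont (a : ℝ) : Continuous (fun t : ℝ => max (1 - |t|/a) 0) := by
  exact (continuous_const.sub (continuous_abs.div_const a)).max continuous_const


lemma essK_integral (a z : ℝ) (ha : 0 < a) :
    ∫ t in Ioc (-a) a, (max (1 - |t|/a) 0) * Real.cos (t*z) = a * essK (a*z) := by
  have hle : (-a : ℝ) ≤ a := by linarith
  set f : ℝ → ℝ := fun t => (max (1 - |t|/a) 0) * Real.cos (t*z) with hf
  have hfc : Continuous f := by
    apply Continuous.mul
    · exact (continuous_const.sub (continuous_abs.div_const a)).max continuous_const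
    · exact Real.continuous_cos.comp (continuous_id.mul continuous_const)
  have h1 : ∫ t in Ioc (-a) a, f t = ∫ t in (-a)..a, f t :=
    (intervalIntegral.integral_of_le hle).symm
  have hsplit : ∫ t in (-a)..a, f t = (∫ t in (-a)..(0:ℝ), f t) + ∫ t in (0:ℝ)..a, f t :=
    (intervalIntegral.integral_add_adjacent_intervals
      (hfc.intervalIntegrable _ _) (hfc.intervalIntegrable _ _)).symm
  have heven : ∫ t in (-a)..(0:ℝ), f t = ∫ t in (0:ℝ)..a, f t := by
    have := intervalIntegral.integral_comp_neg (a := 0) (b := a) f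
    rw [neg_zero] at this
    rw [← this]
    apply intervalIntegral.integral_congr
    intro t _
    simp only [hf, abs_neg, neg_mul, Real.cos_neg]
  have hmain : ∫ t in (0:ℝ)..a, f t = ∫ t in (0:ℝ)..a, (1 - t/a) * Real.cos (t*z) := by
    apply intervalIntegral.integral_congr
    intro t ht
    rw [uIcc_of_le (le_of_lt ha)] at ht
    have h1 : |t| = t := abs_of_nonneg ht.1
    have h2 : t/a ≤ 1 := by rw [div_le_one ha]; exact ht.2
    simp only [hf, h1, max_eq_left (by linarith : (0:ℝ) ≤ 1 - t/a)]
  rw [h1, hsplit, heven, hmain]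
  rcases eq_or_ne z 0 with rfl | hz
  · simp only [mul_zero, Real.cos_zero, mul_one, essK, if_pos rfl, ite_true]
    have hd : ∀ t ∈ uIcc (0:ℝ) a, HasDerivAt (fun t : ℝ => t - t^2/(2*a)) (1 - t/a) t := by
      intro t _
      have h1 : HasDerivAt (fun t : ℝ => t^2/(2*a)) (2*t/(2*a)) t := by
        simpa using ((hasDerivAt_pow 2 t).div_const (2*a))
      have := (hasDerivAt_id t).sub h1
      refine HasDerivAt.congr_deriv this ?_
      have : a ≠ 0 := ne_of_gt ha
      field_simp
    have hFTC := intervalIntegral.integral_eq_sub_of_hasDerivAt hd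
      (((continuous_const.sub (continuous_id.div_const a)).intervalIntegrable _ _))
    rw [hFTC]
    field_simp
    ring
  · have hd : ∀ t ∈ uIcc (0:ℝ) a, HasDerivAt
        (fun t : ℝ => (1 - t/a) * Real.sin (t*z) / z - Real.cos (t*z) / (a*z^2))
        ((1 - t/a) * Real.cos (t*z)) t := by
      intro t _
      have hsin : HasDerivAt (fun t : ℝ => Real.sin (t*z)) (Real.cos (t*z) * z) t :=
        (hasDerivAt_mul_const z).sin
      have hcos : HasDerivAt (fun t : ℝ => Real.cos (t*z)) (-Real.sin (t*z) * z) t :=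
        (hasDerivAt_mul_const z).cos
      have hlin : HasDerivAt (fun t : ℝ => 1 - t/a) (-(1/a)) t := by
        simpa using ((hasDerivAt_id t).div_const a).const_sub 1
      have := ((hlin.mul hsin).div_const z).sub (hcos.div_const (a*z^2))
      refine HasDerivAt.congr_deriv this ?_
      field_simp
      ring
    have hFTC := intervalIntegral.integral_eq_sub_of_hasDerivAt hd
      (((continuous_const.sub (continuous_id.div_const a)).mul
        (Real.continuous_cos.comp (continuous_id.mul continuous_const))).intervalIntegrable _ _)
    rw [hFTC]
    have haz : a*z ≠ 0 := mul_ne_zero (ne_of_gt ha) hz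
    simp only [essK, if_neg haz, zero_mul, Real.sin_zero, Real.cos_zero, zero_div, div_self (ne_of_gt ha)]
    field_simp
    ring

section meas
variable {μ : Measure ℝ} [IsProbabilityMeasure μ]

lemma int_bdd {f : ℝ → ℝ} (hf : Continuous f) (hb : ∀ y, |f y| ≤ 1) : Integrable f μ :=
  (integrable_const 1).mono' hf.aestronglyMeasurable (ae_of_all _ (by simpa using hb))

lemma essK_fubini (g : ℝ → ℝ)
    (hcos : ∀ t, ∫ y, Real.cos (t*y) ∂μ = g t)
    (hsin : ∀ t, ∫ y, Real.sin (t*y) ∂μ = 0)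
    (a c : ℝ) (ha : 0 < a) :
    ∫ t in Ioc (-a) a, (max (1 - |t|/a) 0) * (Real.cos (t*c) * g t)
      = ∫ y, a * essK (a*(y-c)) ∂μ := by
  set w : ℝ → ℝ := fun t => max (1 - |t|/a) 0 with hw
  have hwc : Continuous w := (continuous_const.sub (continuous_abs.div_const a)).max continuous_const
  have hw01 : ∀ t, 0 ≤ w t ∧ w t ≤ 1 := by
    intro t
    refine ⟨le_max_right _ _, ?_⟩
    apply max_le _ zero_le_one
    have : 0 ≤ |t|/a := div_nonneg (abs_nonneg t) (le_of_lt ha)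
    linarith
  set F : ℝ → ℝ → ℝ := fun t y => w t * Real.cos (t*(y-c)) with hF
  have hFc : Continuous (Function.uncurry F) := by
    have : Function.uncurry F = fun q : ℝ × ℝ => w q.1 * Real.cos (q.1 * (q.2 - c)) := rfl
    rw [this]
    exact (hwc.comp continuous_fst).mul
      (Real.continuous_cos.comp (continuous_fst.mul (continuous_snd.sub continuous_const)))
  have hFb : ∀ t y, |F t y| ≤ 1 := by
    intro t y
    rw [abs_mul]
    calc |w t| * |Real.cos (t*(y-c))| ≤ 1 * 1 := by
          apply mul_le_mul _ (Real.abs_cos_le_one _) (abs_nonneg _) zero_le_one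
          rw [abs_of_nonneg (hw01 t).1]; exact (hw01 t).2
      _ = 1 := by ring
  have hfin : IsFiniteMeasure (volume.restrict (Ioc (-a) a)) := by
    constructor
    rw [Measure.restrict_apply_univ, Real.volume_Ioc]
    exact ENNReal.ofReal_lt_top
  have hint : Integrable (Function.uncurry F) ((volume.restrict (Ioc (-a) a)).prod μ) := by
    apply (integrable_const (1:ℝ)).mono' hFc.aestronglyMeasurable
    apply ae_of_all
    intro z
    exact hFb z.1 z.2
  have hswap := integral_integral_swap hint
  have hinner : ∀ t, ∫ y, F t y ∂μ = w t * (Real.cos (t*c) * g t) := by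
    intro t
    have hrw : ∀ y, F t y = w t * (Real.cos (t*y) * Real.cos (t*c)) + w t * (Real.sin (t*y) * Real.sin (t*c)) := by
      intro y
      have : t*(y-c) = t*y - t*c := by ring
      rw [hF]; simp only []
      rw [this, Real.cos_sub]
      ring
    have i1 : Integrable (fun y => Real.cos (t*y)) μ :=
      int_bdd (Real.continuous_cos.comp (continuous_const.mul continuous_id))
        (fun y => Real.abs_cos_le_one _)
    have i2 : Integrable (fun y => Real.sin (t*y)) μ :=
      int_bdd (Real.continuous_sin.comp (continuous_const.mul continuous_id))
        (fun y => Real.abs_sin_le_one _)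
    calc ∫ y, F t y ∂μ
        = ∫ y, (w t * Real.cos (t*c)) * Real.cos (t*y) + (w t * Real.sin (t*c)) * Real.sin (t*y) ∂μ := by
          apply integral_congr_ae; apply ae_of_all; intro y; rw [hrw y]; ring
      _ = (w t * Real.cos (t*c)) * (∫ y, Real.cos (t*y) ∂μ)
          + (w t * Real.sin (t*c)) * (∫ y, Real.sin (t*y) ∂μ) := by
          rw [integral_add (i1.const_mul _) (i2.const_mul _), integral_const_mul, integral_const_mul]
      _ = w t * (Real.cos (t*c) * g t) := by rw [hcos t, hsin t]; ring
  have hinner2 : ∀ y, ∫ t in Ioc (-a) a, F t y = a * essK (a*(y-c)) := by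
    intro y
    exact essK_integral a (y-c) ha
  calc ∫ t in Ioc (-a) a, w t * (Real.cos (t*c) * g t)
      = ∫ t in Ioc (-a) a, ∫ y, F t y ∂μ := by
        apply setIntegral_congr_ae measurableSet_Ioc
        apply ae_of_all; intro t _; rw [hinner t]
    _ = ∫ y, (∫ t in Ioc (-a) a, F t y) ∂μ := hswap
    _ = ∫ y, a * essK (a*(y-c)) ∂μ := by
        apply integral_congr_ae; apply ae_of_all; intro y; exact hinner2 y
end meas

noncomputable def essB (j : ℤ) : ℝ := 5/(1+4*Real.pi^2*((max j (-1-j) : ℤ):ℝ)^2)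

noncomputable def essC : ℝ := ∑' j : ℤ, essB j

lemma essB_nonneg (j : ℤ) : 0 ≤ essB j := by
  unfold essB; positivity

lemma summable_essB_aux : Summable (fun n : ℕ => (5:ℝ)/(1+4*Real.pi^2*(n:ℝ)^2)) := by
  rw [← summable_nat_add_iff 1]
  have hbase : Summable (fun n : ℕ => (1:ℝ)/(n:ℝ)^2) := by
    exact_mod_cast (Real.summable_one_div_nat_pow (p:=2)).mpr one_lt_two
  have hb2 : Summable (fun n : ℕ => (1:ℝ)/((n:ℝ)+1)^2) := by
    have := (summable_nat_add_iff 1).mpr hbase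
    simpa using this
  apply Summable.of_nonneg_of_le (fun n => by positivity) _ hb2
  intro n
  have hpi : (1:ℝ) ≤ Real.pi := by nlinarith [Real.pi_gt_three]
  rw [div_le_div_iff₀ (by positivity) (by positivity)]
  push_cast
  nlinarith [mul_nonneg (by nlinarith [Real.pi_gt_three] : (0:ℝ) ≤ 4*Real.pi^2-5) (sq_nonneg ((n:ℝ)+1))]

lemma summable_essB : Summable essB := by
  apply Summable.of_nat_of_neg
  · have : (fun n : ℕ => essB n) = fun n : ℕ => (5:ℝ)/(1+4*Real.pi^2*(n:ℝ)^2) := by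
      funext n
      unfold essB
      have h1 : (max (n:ℤ) (-1-(n:ℤ)) : ℤ) = (n:ℤ) := by
        apply max_eq_left; omega
      rw [h1]
      norm_num
    rw [this]; exact summable_essB_aux
  · have : (fun n : ℕ => essB (-n)) = fun n : ℕ => (5:ℝ)/(1+4*Real.pi^2*((n-1:ℕ):ℝ)^2) := by
      funext n
      unfold essB
      have h1 : (max (-(n:ℤ)) (-1-(-(n:ℤ))) : ℤ) = ((n-1:ℕ):ℤ) := by
        rcases Nat.eq_zero_or_pos n with rfl | hn
        · simp
        · push_cast [Nat.cast_sub hn]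
          omega
      rw [h1]
      norm_num
    rw [this]
    rw [← summable_nat_add_iff 1]
    simpa using summable_essB_aux

lemma essC_nonneg : 0 ≤ essC := tsum_nonneg essB_nonneg

lemma essK_tail {μ : Measure ℝ} [IsProbabilityMeasure μ] {lam : ℝ} (hlam : 0 < lam) :
    ∫ y, essK ((2*Real.pi/lam) * y) ∂μ ≤ essC * (⨆ x : ℝ, (μ (Icc x (x+lam))).toReal) := by
  set H := 2*Real.pi/lam with hHdef
  have hH : 0 < H := by positivity
  set Q := ⨆ x : ℝ, (μ (Icc x (x+lam))).toReal with hQdef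
  have hQb : BddAbove (range fun x : ℝ => (μ (Icc x (x+lam))).toReal) := by
    refine ⟨1, ?_⟩
    rintro - ⟨x, rfl⟩
    calc (μ (Icc x (x+lam))).toReal ≤ (μ univ).toReal :=
          ENNReal.toReal_mono (measure_ne_top μ univ) (measure_mono (subset_univ _))
      _ = 1 := by simp
  set f : ℝ → ℝ := fun y => essK (H * y) with hfdef
  have hfm : Measurable f := measurable_essK.comp (measurable_const.mul measurable_id)
  have hfint : Integrable f μ :=
    (integrable_const 1).mono' hfm.aestronglyMeasurable
      (ae_of_all _ fun y => by
        rw [Real.norm_eq_abs, abs_of_nonneg (essK_nonneg _)]; exact essK_le_one _)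
  set s : ℤ → Set ℝ := fun j => Ioc (j • lam) ((j+1) • lam) with hsdef
  have hsu : ⋃ j : ℤ, s j = univ := iUnion_Ioc_zsmul hlam
  have hsm : ∀ j : ℤ, MeasurableSet (s j) := fun j => measurableSet_Ioc
  have hsd : Pairwise (Function.onFun Disjoint s) := pairwise_disjoint_Ioc_zsmul lam
  have hdecomp : ∫ y, f y ∂μ = ∑' j : ℤ, ∫ y in s j, f y ∂μ := by
    rw [← setIntegral_univ, ← hsu]
    exact integral_iUnion hsm hsd hfint.integrableOn
  have hpiece : ∀ j : ℤ, ∫ y in s j, f y ∂μ ≤ essB j * Q := by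
    intro j
    have hpt : ∀ y ∈ s j, f y ≤ essB j := by
      intro y hy
      have hy1 : (j:ℝ) * lam < y := by
        have := hy.1; rwa [zsmul_eq_mul] at this
      have hy2 : y ≤ ((j:ℝ)+1) * lam := by
        have := hy.2; rw [zsmul_eq_mul] at this; push_cast at this; linarith
      have hm : lam * ((max j (-1-j) : ℤ):ℝ) ≤ |y| := by
        rcases le_or_gt 0 j with hj | hj
        · have hmax : (max j (-1-j) : ℤ) = j := max_eq_left (by omega)
          rw [hmax]
          have : 0 ≤ (j:ℝ) * lam := mul_nonneg (by exact_mod_cast hj) (le_of_lt hlam)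
          rw [abs_of_nonneg (by linarith)]
          rw [mul_comm]; linarith
        · have hmax : (max j (-1-j) : ℤ) = -1-j := max_eq_right (by omega)
          rw [hmax]
          have hj1 : ((j:ℝ)+1) ≤ 0 := by
            have : (j:ℝ) ≤ -1 := by exact_mod_cast (by omega : j ≤ -1)
            linarith
          have hy0 : y ≤ 0 := le_trans hy2 (mul_nonpos_of_nonpos_of_nonneg hj1 (le_of_lt hlam))
          rw [abs_of_nonpos hy0]
          push_cast
          nlinarith
      calc f y ≤ 5/(1+(H*y)^2) := essK_le _
        _ ≤ essB j := by
            unfold essB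
            apply div_le_div_of_nonneg_left (by norm_num) (by positivity)
            have hm0 : (0:ℝ) ≤ ((max j (-1-j) : ℤ):ℝ) := by exact_mod_cast (by omega : (0:ℤ) ≤ max j (-1-j))
            have h2 : (2*Real.pi*((max j (-1-j) : ℤ):ℝ)) ^2 ≤ (H*y)^2 := by
              rw [← sq_abs (2*Real.pi*((max j (-1-j) : ℤ):ℝ)), ← sq_abs (H*y)]
              apply pow_le_pow_left₀ (abs_nonneg _) _ 2
              rw [abs_of_nonneg (by positivity : (0:ℝ) ≤ 2*Real.pi*((max j (-1-j) : ℤ):ℝ)), abs_mul,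
                abs_of_nonneg (le_of_lt hH)]
              calc 2*Real.pi*((max j (-1-j) : ℤ):ℝ) = H * (lam * ((max j (-1-j) : ℤ):ℝ)) := by
                    rw [hHdef]; field_simp
                _ ≤ H * |y| := by
                    apply mul_le_mul_of_nonneg_left hm (le_of_lt hH)
            nlinarith [h2, Real.pi_pos, sq_nonneg ((max j (-1-j) : ℤ):ℝ)]
    have hsub : s j ⊆ Icc ((j:ℝ)*lam) ((j:ℝ)*lam + lam) := by
      intro y hy
      have hy1 := hy.1; have hy2 := hy.2
      rw [zsmul_eq_mul] at hy1
      rw [zsmul_eq_mul] at hy2; push_cast at hy2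
      constructor <;> [linarith; linarith]
    have hQle : (μ (s j)).toReal ≤ Q := by
      have h1 : (μ (s j)).toReal ≤ (μ (Icc ((j:ℝ)*lam) ((j:ℝ)*lam + lam))).toReal :=
        ENNReal.toReal_mono (measure_ne_top μ _) (measure_mono hsub)
      exact le_trans h1 (le_ciSup hQb ((j:ℝ)*lam))
    calc ∫ y in s j, f y ∂μ ≤ ∫ _y in s j, essB j ∂μ := by
          apply setIntegral_mono_on hfint.integrableOn (Iff.mpr integrableOn_const_iff (Or.inr ?_)) (hsm j) hpt
          exact lt_of_le_of_lt (measure_mono (subset_univ _)) (by simp : μ univ < ⊤)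
      _ = (μ (s j)).toReal * essB j := by rw [setIntegral_const]; rw [smul_eq_mul, measureReal_def]
      _ ≤ essB j * Q := by
          rw [mul_comm]
          exact mul_le_mul_of_nonneg_left hQle (essB_nonneg j)
  have hQ0 : 0 ≤ Q := le_trans ENNReal.toReal_nonneg (le_ciSup hQb 0)
  have hsummB : Summable (fun j : ℤ => essB j * Q) := summable_essB.mul_right Q
  have hsummL : Summable (fun j : ℤ => ∫ y in s j, f y ∂μ) := by
    apply Summable.of_nonneg_of_le _ hpiece hsummB
    intro j
    apply setIntegral_nonneg (hsm j)
    intro y _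
    exact essK_nonneg _
  calc ∫ y, essK (H * y) ∂μ = ∑' j : ℤ, ∫ y in s j, f y ∂μ := hdecomp
    _ ≤ ∑' j : ℤ, essB j * Q := Summable.tsum_le_tsum hpiece hsummL hsummB
    _ = essC * Q := by rw [tsum_mul_right]; rfl

lemma esseen_bounds (μ : Measure ℝ) [IsProbabilityMeasure μ] (g : ℝ → ℝ)
    (hgc : Continuous g)
    (hcos : ∀ t, ∫ y, Real.cos (t*y) ∂μ = g t)
    (hsin : ∀ t, ∫ y, Real.sin (t*y) ∂μ = 0)
    (p : ℝ) (hp : 0 < p) (hgp : ∀ t ∈ Icc (-p) p, 0 ≤ g t)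
    (lam : ℝ) (hlam : 2 * Real.pi / p < lam) :
    (1/(4*Real.pi*(essC+1))) * lam * (∫ t in (-(Real.pi/lam))..(Real.pi/lam), g t)
      ≤ (⨆ x : ℝ, (μ (Icc x (x+lam))).toReal) ∧
    (⨆ x : ℝ, (μ (Icc x (x+lam))).toReal)
      ≤ 2 * lam * (∫ t in (-(Real.pi/lam))..(Real.pi/lam), g t) := by
  have hpi := Real.pi_pos
  have hpi1 : (1:ℝ) ≤ Real.pi := by nlinarith [Real.pi_gt_three]
  have hlam0 : 0 < lam := lt_trans (by positivity) hlam
  set h := Real.pi/lam with hhdef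
  set H := 2*Real.pi/lam with hHdef
  set a := 1/lam with hadef
  have hh0 : 0 < h := by positivity
  have hH0 : 0 < H := by positivity
  have ha0 : 0 < a := by positivity
  have hah : a ≤ h := by
    rw [hadef, hhdef]
    gcongr
  have hhH : h = H/2 := by rw [hhdef, hHdef]; ring
  have hHp : H < p := by
    rw [hHdef, div_lt_iff₀ hlam0]
    rw [div_lt_iff₀ hp] at hlam
    linarith [hlam]
  -- nonnegativity of g on [-H, H]
  have hgH : ∀ t ∈ Icc (-H) H, 0 ≤ g t := fun t ht =>
    hgp t (Icc_subset_Icc (by linarith) (by linarith) ht)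
  -- the target integral
  have hIeq : (∫ t in (-(Real.pi/lam))..(Real.pi/lam), g t) = ∫ t in Ioc (-h) h, g t := by
    rw [intervalIntegral.integral_of_le (by linarith : -h ≤ h)]
  set I := ∫ t in Ioc (-h) h, g t with hIdef
  set Q := ⨆ x : ℝ, (μ (Icc x (x+lam))).toReal with hQdef
  have hQb : BddAbove (range fun x : ℝ => (μ (Icc x (x+lam))).toReal) := by
    refine ⟨1, ?_⟩
    rintro - ⟨x, rfl⟩
    calc (μ (Icc x (x+lam))).toReal ≤ (μ univ).toReal :=
          ENNReal.toReal_mono (measure_ne_top μ univ) (measure_mono (subset_univ _))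
      _ = 1 := by simp
  have hQ0 : 0 ≤ Q := le_trans ENNReal.toReal_nonneg (le_ciSup hQb 0)
  have hw01 : ∀ b t : ℝ, 0 < b → 0 ≤ max (1 - |t|/b) 0 ∧ max (1 - |t|/b) 0 ≤ 1 := by
    intro b t hb
    refine ⟨le_max_right _ _, ?_⟩
    apply max_le _ zero_le_one
    have : 0 ≤ |t|/b := div_nonneg (abs_nonneg t) (le_of_lt hb)
    linarith
  have hgI : ∀ b : ℝ, IntegrableOn g (Ioc (-b) b) volume := fun b =>
    hgc.integrableOn_Ioc
  constructor
  · -- LOWER bound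
    rw [hIeq]
    have hwHc : Continuous (fun t : ℝ => max (1 - |t|/H) 0) :=
      (continuous_const.sub (continuous_abs.div_const H)).max continuous_const
    have hintH : ∀ b : ℝ, IntegrableOn
        (fun t => (max (1 - |t|/H) 0) * (Real.cos (t*0) * g t)) (Ioc (-b) b) volume := fun b =>
      (hwHc.mul ((Real.continuous_cos.comp (continuous_id.mul continuous_const)).mul
        hgc)).integrableOn_Ioc
    have L1 : I ≤ 2 * ∫ t in Ioc (-h) h, (max (1 - |t|/H) 0) * (Real.cos (t*0) * g t) := by
      rw [hIdef, ← integral_const_mul]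
      apply setIntegral_mono_on (hgI h) ((hintH h).const_mul 2) measurableSet_Ioc
      intro t ht
      have htp : t ∈ Icc (-p) p :=
        ⟨by linarith [ht.1, hhH, hHp, hH0], by linarith [ht.2, hhH, hHp, hH0]⟩
      have hg0 : 0 ≤ g t := hgp t htp
      have habs : |t| ≤ H/2 := by
        rw [abs_le]
        exact ⟨by linarith [ht.1, hhH], by linarith [ht.2, hhH]⟩
      have hwge : (1:ℝ)/2 ≤ max (1 - |t|/H) 0 := by
        apply le_max_of_le_left
        have h2 : |t|/H ≤ 1/2 := by rw [div_le_iff₀ hH0]; linarith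
        linarith
      rw [mul_zero, Real.cos_zero, one_mul]
      nlinarith [hwge, hg0]
    have L2 : ∫ t in Ioc (-h) h, (max (1 - |t|/H) 0) * (Real.cos (t*0) * g t)
        ≤ ∫ t in Ioc (-H) H, (max (1 - |t|/H) 0) * (Real.cos (t*0) * g t) := by
      apply setIntegral_mono_set (hintH H)
      · filter_upwards [ae_restrict_mem measurableSet_Ioc] with t ht
        have htp : t ∈ Icc (-p) p :=
          ⟨by linarith [ht.1, hHp], by linarith [ht.2, hHp]⟩
        have hg0 : 0 ≤ g t := hgp t htp
        have hw0 : (0:ℝ) ≤ max (1 - |t|/H) 0 := le_max_right _ _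
        show (0:ℝ) ≤ _
        rw [mul_zero, Real.cos_zero, one_mul]
        exact mul_nonneg hw0 hg0
      · apply HasSubset.Subset.eventuallyLE
        apply Ioc_subset_Ioc <;> linarith [hhH, hH0]
    have L3 : ∫ t in Ioc (-H) H, (max (1 - |t|/H) 0) * (Real.cos (t*0) * g t)
        = H * ∫ y, essK (H*y) ∂μ := by
      rw [essK_fubini g hcos hsin H 0 hH0]
      rw [← integral_const_mul]
      apply integral_congr_ae
      apply ae_of_all
      intro y
      show H * essK (H * (y - 0)) = H * essK (H * y)
      rw [sub_zero]
    have L5 : ∫ y, essK (H*y) ∂μ ≤ essC * Q := by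
      rw [hHdef, hQdef]
      exact essK_tail hlam0
    have hchain : I ≤ 2 * (H * (essC * Q)) := by
      calc I ≤ 2 * ∫ t in Ioc (-h) h, (max (1 - |t|/H) 0) * (Real.cos (t*0) * g t) := L1
        _ ≤ 2 * ∫ t in Ioc (-H) H, (max (1 - |t|/H) 0) * (Real.cos (t*0) * g t) := by
            linarith [L2]
        _ = 2 * (H * ∫ y, essK (H*y) ∂μ) := by rw [L3]
        _ ≤ 2 * (H * (essC * Q)) := by
            apply mul_le_mul_of_nonneg_left _ (by norm_num : (0:ℝ) ≤ 2)
            exact mul_le_mul_of_nonneg_left L5 (le_of_lt hH0)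
    have hm0 : (0:ℝ) < 1/(4*Real.pi*(essC+1)) := by
      have := essC_nonneg
      positivity
    calc (1/(4*Real.pi*(essC+1))) * lam * I
        ≤ (1/(4*Real.pi*(essC+1))) * lam * (2 * (H * (essC * Q))) := by
          apply mul_le_mul_of_nonneg_left hchain (by positivity)
      _ = (essC/(essC+1)) * Q := by
          rw [hHdef]
          have h1 : essC + 1 ≠ 0 := by linarith [essC_nonneg]
          field_simp
          ring
      _ ≤ Q := by
          apply mul_le_of_le_one_left hQ0
          rw [div_le_one (by linarith [essC_nonneg])]
          linarith [essC_nonneg]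
  · -- UPPER bound
    rw [hIeq]
    apply ciSup_le
    intro x
    set c := x + lam/2 with hcdef
    -- step 1 : measure ≤ ∫ 2 essK
    have hKm : Measurable (fun y => 2 * essK (a*(y-c))) :=
      (measurable_essK.comp ((measurable_id.sub_const c).const_mul a)).const_mul 2
    have hKint : Integrable (fun y => 2 * essK (a*(y-c))) μ :=
      (integrable_const 2).mono' hKm.aestronglyMeasurable
        (ae_of_all _ fun y => by
          rw [Real.norm_eq_abs, abs_of_nonneg (by linarith [essK_nonneg (a*(y-c))] : (0:ℝ) ≤ 2 * essK (a*(y-c)))]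
          linarith [essK_le_one (a*(y-c))])
    have step1 : (μ (Icc x (x+lam))).toReal ≤ ∫ y, 2 * essK (a*(y-c)) ∂μ := by
      rw [← measureReal_def, ← integral_indicator_one measurableSet_Icc]
      apply integral_mono ((integrable_const (1:ℝ)).indicator measurableSet_Icc) hKint
      intro y
      by_cases hy : y ∈ Icc x (x+lam)
      · rw [indicator_of_mem hy]
        have h1 : |a*(y-c)| ≤ 1/2 := by
          rw [abs_mul, abs_of_nonneg (le_of_lt ha0)]
          have hyc : |y - c| ≤ lam/2 := by
            rw [abs_le, hcdef]
            constructor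
            · linarith [hy.1]
            · linarith [hy.2]
          calc a * |y-c| ≤ a * (lam/2) := mul_le_mul_of_nonneg_left hyc (le_of_lt ha0)
            _ = 1/2 := by rw [hadef]; field_simp
        have := essK_half h1
        simp only [Pi.one_apply]
        linarith
      · rw [indicator_of_notMem hy]
        simp only [Pi.zero_apply]
        linarith [essK_nonneg (a*(y-c))]
    -- step 2 : Fubini
    have step2 : ∫ y, 2 * essK (a*(y-c)) ∂μ
        = (2/a) * ∫ t in Ioc (-a) a, (max (1 - |t|/a) 0) * (Real.cos (t*c) * g t) := by
      rw [essK_fubini g hcos hsin a c ha0]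
      rw [integral_const_mul, integral_const_mul]
      field_simp
    -- step 3 : kill the weight
    have step3 : ∫ t in Ioc (-a) a, (max (1 - |t|/a) 0) * (Real.cos (t*c) * g t)
        ≤ ∫ t in Ioc (-a) a, g t := by
      apply setIntegral_mono_on
      · exact (((continuous_const.sub (continuous_abs.div_const a)).max continuous_const).mul
          ((Real.continuous_cos.comp (continuous_id.mul continuous_const)).mul hgc)).integrableOn_Ioc
      · exact hgI a
      · exact measurableSet_Ioc
      · intro t ht
        have htp : t ∈ Icc (-p) p := by
          constructor
          · have := ht.1; linarith [hah, hhH, hHp, abs_nonneg t]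
          · have := ht.2; linarith [hah, hhH, hHp]
        have hg0 : 0 ≤ g t := hgp t htp
        have hw := hw01 a t ha0
        have hc1 : Real.cos (t*c) ≤ 1 := Real.cos_le_one _
        have hc2 : -1 ≤ Real.cos (t*c) := Real.neg_one_le_cos _
        calc ((1 - |t|/a) ⊔ 0) * (Real.cos (t*c) * g t)
            ≤ ((1 - |t|/a) ⊔ 0) * g t := by
              apply mul_le_mul_of_nonneg_left _ hw.1
              nlinarith
          _ ≤ 1 * g t := mul_le_mul_of_nonneg_right hw.2 hg0
          _ = g t := one_mul _
    -- step 4 : enlarge interval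
    have step4 : ∫ t in Ioc (-a) a, g t ≤ I := by
      rw [hIdef]
      apply setIntegral_mono_set (hgI h)
      · filter_upwards [ae_restrict_mem measurableSet_Ioc] with t ht
        show (0:ℝ) ≤ g t
        exact hgp t (Icc_subset_Icc (by linarith [hhH, hHp]) (by linarith [hhH, hHp]) (Ioc_subset_Icc_self ht))
      · apply HasSubset.Subset.eventuallyLE
        apply Ioc_subset_Ioc <;> linarith
    have h2a : 2/a = 2*lam := by rw [hadef]; field_simp
    calc (μ (Icc x (x+lam))).toReal ≤ ∫ y, 2 * essK (a*(y-c)) ∂μ := step1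
      _ = (2/a) * ∫ t in Ioc (-a) a, (max (1 - |t|/a) 0) * (Real.cos (t*c) * g t) := step2
      _ ≤ (2/a) * I := by
          apply mul_le_mul_of_nonneg_left (le_trans step3 step4) (by positivity)
      _ = 2 * lam * I := by rw [h2a]

/-- Esseen-type two-sided bound: there are universal constants `0 < m ≤ M` such that
for any symmetric random walk whose jump characteristic function `φ` is nonnegative on
`[-p, p]`, for every `λ > 2π/p` and `n ≥ 1`,
`m·λ·∫_{-π/λ}^{π/λ} φ(t)ⁿ dt ≤ Q(M_n, λ) ≤ M·λ·∫_{-π/λ}^{π/λ} φ(t)ⁿ dt`. -/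
theorem stmt_19 :
    ∃ m M : ℝ, 0 < m ∧ m ≤ M ∧
      ∀ (Ω : Type) (_ : MeasureSpace Ω), IsProbabilityMeasure (ℙ : Measure Ω) →
        ∀ (X : ℕ → Ω → ℝ),
          (∀ i, Measurable (X i)) →
          iIndepFun X ℙ →
          (∀ i, IdentDistrib (X i) (X 0) ℙ ℙ) →
          Measure.map (X 0) ℙ = Measure.map (fun ω => -(X 0 ω)) ℙ →
          ∀ p : ℝ, 0 < p →
            (∀ t ∈ Set.Icc (-p) p, 0 ≤ ∫ ω, Real.cos (t * X 0 ω) ∂ℙ) →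
            ∀ lam : ℝ, 2 * Real.pi / p < lam → ∀ n : ℕ, 1 ≤ n →
              m * lam * (∫ t in (-(Real.pi / lam))..(Real.pi / lam),
                    (∫ ω, Real.cos (t * X 0 ω) ∂ℙ) ^ n)
                  ≤ (⨆ x : ℝ, (ℙ {ω | x ≤ ∑ i ∈ Finset.range n, X i ω ∧
                      ∑ i ∈ Finset.range n, X i ω ≤ x + lam}).toReal) ∧
              (⨆ x : ℝ, (ℙ {ω | x ≤ ∑ i ∈ Finset.range n, X i ω ∧
                  ∑ i ∈ Finset.range n, X i ω ≤ x + lam}).toReal)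
                ≤ M * lam * (∫ t in (-(Real.pi / lam))..(Real.pi / lam),
                    (∫ ω, Real.cos (t * X 0 ω) ∂ℙ) ^ n) := by
  have hpi := Real.pi_pos
  have hC := essC_nonneg
  have hden : (0:ℝ) < 4*Real.pi*(essC+1) := by nlinarith
  refine ⟨1/(4*Real.pi*(essC+1)), 2, by positivity, ?_, ?_⟩
  · rw [div_le_iff₀ hden]
    nlinarith [Real.pi_gt_three]
  intro Ω mΩ hprob X hmeas hindep hident hsymm p hp hφpos lam hlam n _hn
  set φ : ℝ → ℝ := fun t => ∫ ω, Real.cos (t * X 0 ω) ∂ℙ with hφdef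
  -- continuity of φ
  have hφc : Continuous φ := by
    apply continuous_of_dominated (bound := fun _ => (1:ℝ))
    · intro t
      exact ((Real.measurable_cos.comp ((hmeas 0).const_mul t)).aestronglyMeasurable)
    · intro t
      apply ae_of_all
      intro ω
      rw [Real.norm_eq_abs]
      exact Real.abs_cos_le_one _
    · exact integrable_const 1
    · apply ae_of_all
      intro ω
      exact Real.continuous_cos.comp (continuous_id.mul continuous_const)
  -- sin integrals vanish
  have hσ : ∀ t, ∫ ω, Real.sin (t * X 0 ω) ∂ℙ = 0 := by
    intro t
    have hm : AEStronglyMeasurable (fun x : ℝ => Real.sin (t * x)) (Measure.map (X 0) ℙ) :=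
      (Real.continuous_sin.comp (continuous_const.mul continuous_id)).aestronglyMeasurable
    have hm2 : AEStronglyMeasurable (fun x : ℝ => Real.sin (t * x))
        (Measure.map (fun ω => -(X 0 ω)) ℙ) := by rw [← hsymm]; exact hm
    have e1 : ∫ ω, Real.sin (t * X 0 ω) ∂ℙ = ∫ x, Real.sin (t * x) ∂(Measure.map (X 0) ℙ) :=
      (integral_map (hmeas 0).aemeasurable hm).symm
    have e2 : ∫ x, Real.sin (t * x) ∂(Measure.map (fun ω => -(X 0 ω)) ℙ)
        = ∫ ω, Real.sin (t * -(X 0 ω)) ∂ℙ :=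
      integral_map ((hmeas 0).neg).aemeasurable hm2
    have e3 : ∫ ω, Real.sin (t * -(X 0 ω)) ∂ℙ = - ∫ ω, Real.sin (t * X 0 ω) ∂ℙ := by
      rw [← integral_neg]
      congr 1
      funext ω
      rw [mul_neg, Real.sin_neg]
    have key : ∫ ω, Real.sin (t * X 0 ω) ∂ℙ = - ∫ ω, Real.sin (t * X 0 ω) ∂ℙ :=
      calc ∫ ω, Real.sin (t * X 0 ω) ∂ℙ = ∫ x, Real.sin (t*x) ∂(Measure.map (X 0) ℙ) := e1
        _ = ∫ x, Real.sin (t*x) ∂(Measure.map (fun ω => -(X 0 ω)) ℙ) := by rw [hsymm]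
        _ = ∫ ω, Real.sin (t * -(X 0 ω)) ∂ℙ := e2
        _ = - ∫ ω, Real.sin (t * X 0 ω) ∂ℙ := e3
    linarith
  -- integrability helpers on Ω
  have hib : ∀ (f : Ω → ℝ), Measurable f → (∀ ω, |f ω| ≤ 1) → Integrable f ℙ := by
    intro f hf hb
    exact (integrable_const 1).mono' hf.aestronglyMeasurable
      (ae_of_all _ fun ω => by rw [Real.norm_eq_abs]; exact hb ω)
  -- characteristic function of partial sums, by induction
  have hSm : ∀ k : ℕ, Measurable (fun ω => ∑ i ∈ Finset.range k, X i ω) := by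
    intro k
    exact Finset.measurable_sum _ (fun i _ => hmeas i)
  have hchar : ∀ k : ℕ, ∀ t : ℝ,
      (∫ ω, Real.cos (t * ∑ i ∈ Finset.range k, X i ω) ∂ℙ = φ t ^ k) ∧
      (∫ ω, Real.sin (t * ∑ i ∈ Finset.range k, X i ω) ∂ℙ = 0) := by
    intro k
    induction k with
    | zero =>
      intro t
      simp [Real.cos_zero, Real.sin_zero]
    | succ k ih =>
      intro t
      have hSum : (fun ω => ∑ i ∈ Finset.range k, X i ω) = ∑ i ∈ Finset.range k, X i := by
        funext ω; rw [Finset.sum_apply]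
      have hind : IndepFun (∑ i ∈ Finset.range k, X i) (X k) ℙ :=
        hindep.indepFun_finset_sum_of_notMem hmeas (Finset.notMem_range_self)
      have mcos : Measurable (fun s : ℝ => Real.cos (t*s)) :=
        Real.measurable_cos.comp (measurable_id.const_mul t)
      have msin : Measurable (fun s : ℝ => Real.sin (t*s)) :=
        Real.measurable_sin.comp (measurable_id.const_mul t)
      have icosS : Integrable (fun ω => Real.cos (t * ∑ i ∈ Finset.range k, X i ω)) ℙ :=
        hib _ (mcos.comp (hSm k)) (fun ω => Real.abs_cos_le_one _)
      have isinS : Integrable (fun ω => Real.sin (t * ∑ i ∈ Finset.range k, X i ω)) ℙ :=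
        hib _ (msin.comp (hSm k)) (fun ω => Real.abs_sin_le_one _)
      have icosX : Integrable (fun ω => Real.cos (t * X k ω)) ℙ :=
        hib _ (mcos.comp (hmeas k)) (fun ω => Real.abs_cos_le_one _)
      have isinX : Integrable (fun ω => Real.sin (t * X k ω)) ℙ :=
        hib _ (msin.comp (hmeas k)) (fun ω => Real.abs_sin_le_one _)
      have hindcc : IndepFun (fun ω => Real.cos (t * ∑ i ∈ Finset.range k, X i ω))
          (fun ω => Real.cos (t * X k ω)) ℙ := by
        have := hind.comp mcos mcos
        rwa [← hSum] at this
      have hindsc : IndepFun (fun ω => Real.sin (t * ∑ i ∈ Finset.range k, X i ω))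
          (fun ω => Real.cos (t * X k ω)) ℙ := by
        have := hind.comp msin mcos
        rwa [← hSum] at this
      have hindcs : IndepFun (fun ω => Real.cos (t * ∑ i ∈ Finset.range k, X i ω))
          (fun ω => Real.sin (t * X k ω)) ℙ := by
        have := hind.comp mcos msin
        rwa [← hSum] at this
      have hindss : IndepFun (fun ω => Real.sin (t * ∑ i ∈ Finset.range k, X i ω))
          (fun ω => Real.sin (t * X k ω)) ℙ := by
        have := hind.comp msin msin
        rwa [← hSum] at this
      have hcosX : ∫ ω, Real.cos (t * X k ω) ∂ℙ = φ t :=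
        ((hident k).comp mcos).integral_eq
      have hsinX : ∫ ω, Real.sin (t * X k ω) ∂ℙ = 0 :=
        Eq.trans ((hident k).comp msin).integral_eq (hσ t)
      have imul1 : Integrable (fun ω => Real.cos (t * ∑ i ∈ Finset.range k, X i ω) * Real.cos (t * X k ω)) ℙ :=
        hindcc.integrable_mul icosS icosX
      have imul2 : Integrable (fun ω => Real.sin (t * ∑ i ∈ Finset.range k, X i ω) * Real.sin (t * X k ω)) ℙ :=
        hindss.integrable_mul isinS isinX
      have imul3 : Integrable (fun ω => Real.sin (t * ∑ i ∈ Finset.range k, X i ω) * Real.cos (t * X k ω)) ℙ :=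
        hindsc.integrable_mul isinS icosX
      have imul4 : Integrable (fun ω => Real.cos (t * ∑ i ∈ Finset.range k, X i ω) * Real.sin (t * X k ω)) ℙ :=
        hindcs.integrable_mul icosS isinX
      have emul1 : ∫ ω, Real.cos (t * ∑ i ∈ Finset.range k, X i ω) * Real.cos (t * X k ω) ∂ℙ
          = (∫ ω, Real.cos (t * ∑ i ∈ Finset.range k, X i ω) ∂ℙ) * (∫ ω, Real.cos (t * X k ω) ∂ℙ) :=
        hindcc.integral_fun_mul_eq_mul_integral icosS.1 icosX.1
      have emul2 : ∫ ω, Real.sin (t * ∑ i ∈ Finset.range k, X i ω) * Real.sin (t * X k ω) ∂ℙ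
          = (∫ ω, Real.sin (t * ∑ i ∈ Finset.range k, X i ω) ∂ℙ) * (∫ ω, Real.sin (t * X k ω) ∂ℙ) :=
        hindss.integral_fun_mul_eq_mul_integral isinS.1 isinX.1
      have emul3 : ∫ ω, Real.sin (t * ∑ i ∈ Finset.range k, X i ω) * Real.cos (t * X k ω) ∂ℙ
          = (∫ ω, Real.sin (t * ∑ i ∈ Finset.range k, X i ω) ∂ℙ) * (∫ ω, Real.cos (t * X k ω) ∂ℙ) :=
        hindsc.integral_fun_mul_eq_mul_integral isinS.1 icosX.1
      have emul4 : ∫ ω, Real.cos (t * ∑ i ∈ Finset.range k, X i ω) * Real.sin (t * X k ω) ∂ℙ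
          = (∫ ω, Real.cos (t * ∑ i ∈ Finset.range k, X i ω) ∂ℙ) * (∫ ω, Real.sin (t * X k ω) ∂ℙ) :=
        hindcs.integral_fun_mul_eq_mul_integral icosS.1 isinX.1
      have hsplit : ∀ ω, t * ∑ i ∈ Finset.range (k+1), X i ω
          = t * ∑ i ∈ Finset.range k, X i ω + t * X k ω := by
        intro ω
        rw [Finset.sum_range_succ]
        ring
      constructor
      · calc ∫ ω, Real.cos (t * ∑ i ∈ Finset.range (k+1), X i ω) ∂ℙ
            = ∫ ω, (Real.cos (t * ∑ i ∈ Finset.range k, X i ω) * Real.cos (t * X k ω)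
              - Real.sin (t * ∑ i ∈ Finset.range k, X i ω) * Real.sin (t * X k ω)) ∂ℙ := by
              congr 1
              funext ω
              rw [hsplit ω, Real.cos_add]
          _ = (∫ ω, Real.cos (t * ∑ i ∈ Finset.range k, X i ω) ∂ℙ) * (∫ ω, Real.cos (t * X k ω) ∂ℙ)
              - (∫ ω, Real.sin (t * ∑ i ∈ Finset.range k, X i ω) ∂ℙ) * (∫ ω, Real.sin (t * X k ω) ∂ℙ) := by
              rw [integral_sub imul1 imul2, emul1, emul2]
          _ = φ t ^ (k+1) := by
              rw [(ih t).1, (ih t).2, hcosX, hsinX]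
              ring
      · calc ∫ ω, Real.sin (t * ∑ i ∈ Finset.range (k+1), X i ω) ∂ℙ
            = ∫ ω, (Real.sin (t * ∑ i ∈ Finset.range k, X i ω) * Real.cos (t * X k ω)
              + Real.cos (t * ∑ i ∈ Finset.range k, X i ω) * Real.sin (t * X k ω)) ∂ℙ := by
              congr 1
              funext ω
              rw [hsplit ω, Real.sin_add]
          _ = (∫ ω, Real.sin (t * ∑ i ∈ Finset.range k, X i ω) ∂ℙ) * (∫ ω, Real.cos (t * X k ω) ∂ℙ)
              + (∫ ω, Real.cos (t * ∑ i ∈ Finset.range k, X i ω) ∂ℙ) * (∫ ω, Real.sin (t * X k ω) ∂ℙ) := by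
              rw [integral_add imul3 imul4, emul3, emul4]
          _ = 0 := by
              rw [(ih t).1, (ih t).2, hcosX, hsinX]
              ring
  -- pass to the pushforward measure
  set S : Ω → ℝ := fun ω => ∑ i ∈ Finset.range n, X i ω with hSdef
  have hS : Measurable S := hSm n
  set μ : Measure ℝ := Measure.map S ℙ with hμdef
  have : IsProbabilityMeasure μ := Measure.isProbabilityMeasure_map hS.aemeasurable
  have hcosμ : ∀ t, ∫ y, Real.cos (t*y) ∂μ = φ t ^ n := by
    intro t
    have h1 : ∫ y, Real.cos (t*y) ∂(Measure.map S ℙ) = ∫ ω, Real.cos (t * S ω) ∂ℙ :=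
      integral_map hS.aemeasurable
        (Real.continuous_cos.comp (continuous_const.mul continuous_id)).aestronglyMeasurable
    rw [hμdef, h1]
    exact (hchar n t).1
  have hsinμ : ∀ t, ∫ y, Real.sin (t*y) ∂μ = 0 := by
    intro t
    have h1 : ∫ y, Real.sin (t*y) ∂(Measure.map S ℙ) = ∫ ω, Real.sin (t * S ω) ∂ℙ :=
      integral_map hS.aemeasurable
        (Real.continuous_sin.comp (continuous_const.mul continuous_id)).aestronglyMeasurable
    rw [hμdef, h1]
    exact (hchar n t).2
  have hsup : ∀ x : ℝ, (ℙ {ω | x ≤ S ω ∧ S ω ≤ x + lam}) = μ (Icc x (x+lam)) := by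
    intro x
    rw [hμdef, Measure.map_apply hS measurableSet_Icc]
    rfl
  have hmain := esseen_bounds μ (fun t => φ t ^ n) (hφc.pow n) hcosμ hsinμ p hp
    (fun t ht => pow_nonneg (hφpos t ht) n) lam hlam
  constructor
  · refine le_trans hmain.1 ?_
    apply le_of_eq
    apply iSup_congr
    intro x
    rw [hsup x]
  · refine le_trans (le_of_eq ?_) hmain.2
    apply iSup_congr
    intro x
    rw [hsup x]
end
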